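/- arXiv:2002.00354 — 8 statements merged into one kernel-verified Lean document; each statement's English description precedes it below -/
import Mathlib

section
/- Let β, γ > 0 and let (S, I) : ℝ → ℝ² be a solution of the SIR layer equation S' = −β S I, I' = I(β S − γ) with S(t) > 0 and I(t) > 0 for all t ∈ ℝ. Then there exist real numbers S₊ and S₋ with 0 < S₊ ≤ γ/β ≤ S₋ such that (S(t), I(t)) → (S₊, 0) as t → +∞ and (S(t), I(t)) → (S₋, 0) as t → −∞; moreover γ·log S₊ − β·S₊ = Γ(S(0), I(0)) and γ·log S₋ − β·S₋ = Γ(S(0), I(0)). In other words, every orbit of the layer equation in the open first quadrant is heteroclinic between two points on the S-axis lying on the same level set of Γ. -/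
open Filter

/-- Every orbit of the SIR layer equation `S' = -β S I`, `I' = I (β S - γ)` in the
open first quadrant is heteroclinic between two points on the `S`-axis lying on the
same level set of `Γ(S, I) = γ log S - β (S + I)`. -/
theorem sir_layer_heteroclinic
    (β γ : ℝ) (hβ : 0 < β) (hγ : 0 < γ)
    (S I : ℝ → ℝ)
    (hS : ∀ t : ℝ, HasDerivAt S (-β * S t * I t) t)
    (hI : ∀ t : ℝ, HasDerivAt I (I t * (β * S t - γ)) t)
    (hSpos : ∀ t : ℝ, 0 < S t) (hIpos : ∀ t : ℝ, 0 < I t) :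
    ∃ Splus Sminus : ℝ,
      0 < Splus ∧ Splus ≤ γ / β ∧ γ / β ≤ Sminus ∧
      Tendsto (fun t => (S t, I t)) atTop (nhds (Splus, 0)) ∧
      Tendsto (fun t => (S t, I t)) atBot (nhds (Sminus, 0)) ∧
      γ * Real.log Splus - β * Splus = γ * Real.log (S 0) - β * (S 0 + I 0) ∧
      γ * Real.log Sminus - β * Sminus = γ * Real.log (S 0) - β * (S 0 + I 0) := by
  have hSne : ∀ t, S t ≠ 0 := fun t => (hSpos t).ne'
  set c : ℝ := γ * Real.log (S 0) - β * (S 0 + I 0) with hc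
  -- Γ is a first integral
  have hg : ∀ t, HasDerivAt (fun t => γ * Real.log (S t) - β * (S t + I t)) 0 t := by
    intro t
    have h1 : HasDerivAt (fun t => Real.log (S t)) (-β * S t * I t / S t) t :=
      (hS t).log (hSne t)
    have h2 := (h1.const_mul γ).sub (((hS t).add (hI t)).const_mul β)
    refine h2.congr_deriv ?_
    field_simp [hSne t]
    ring
  have hcons : ∀ t, γ * Real.log (S t) - β * (S t + I t) = c := fun t =>
    is_const_of_deriv_eq_zero (fun x => (hg x).differentiableAt)
      (fun x => (hg x).deriv) t 0
  have hfS : ∀ t, γ * Real.log (S t) - β * S t = c + β * I t := fun t => by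
    have := hcons t; ring_nf at this ⊢; linarith
  -- S is strictly decreasing
  have hSanti : StrictAnti S := strictAnti_of_deriv_neg fun t => by
    rw [(hS t).deriv]
    have := mul_pos (mul_pos hβ (hSpos t)) (hIpos t)
    nlinarith
  -- γ log x - β x → -∞ as x → ∞
  have hftop : Tendsto (fun x : ℝ => γ * Real.log x - β * x) atTop atBot := by
    have h1 : (fun x : ℝ => γ * Real.log x) =o[atTop] (fun x : ℝ => x) :=
      Real.isLittleO_log_id_atTop.const_mul_left γ
    rw [Asymptotics.isLittleO_iff] at h1
    have h2 := h1 (show (0 : ℝ) < β / 2 by positivity)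
    have h3 : Tendsto (fun x : ℝ => -(β / 2) * x) atTop atBot :=
      (tendsto_const_mul_atBot_of_neg (by linarith : -(β / 2) < (0:ℝ))).2 tendsto_id
    refine tendsto_atBot_mono' atTop ?_ h3
    filter_upwards [h2, eventually_ge_atTop (1 : ℝ)] with x hx h1x
    have hxpos : (0 : ℝ) < x := by linarith
    rw [Real.norm_eq_abs, Real.norm_eq_abs, abs_of_pos hxpos] at hx
    have : γ * Real.log x ≤ β / 2 * x := (le_abs_self _).trans hx
    linarith
  -- S is bounded above
  obtain ⟨M, hM⟩ := eventually_atTop.1 (hftop.eventually (eventually_lt_atBot c))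
  have hSub : ∀ t, S t ≤ M := by
    intro t
    by_contra h
    push_neg at h
    have h1 := hM (S t) h.le
    have h2 := hfS t
    have := mul_pos hβ (hIpos t)
    linarith
  have hbb : BddBelow (Set.range S) := ⟨0, by rintro x ⟨t, rfl⟩; exact (hSpos t).le⟩
  have hba : BddAbove (Set.range S) := ⟨M, by rintro x ⟨t, rfl⟩; exact hSub t⟩
  set Sp : ℝ := ⨅ t, S t with hSp
  set Sm : ℝ := ⨆ t, S t with hSm
  have hStop : Tendsto S atTop (nhds Sp) := tendsto_atTop_ciInf hSanti.antitone hbb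
  have hSbot : Tendsto S atBot (nhds Sm) := tendsto_atBot_ciSup hSanti.antitone hba
  have hSpLe : ∀ t, Sp ≤ S t := fun t => ciInf_le hbb t
  have hSmLe : ∀ t, S t ≤ Sm := fun t => le_ciSup hba t
  have hSpNonneg : 0 ≤ Sp := le_ciInf fun t => (hSpos t).le
  -- Sp > 0
  have hSpPos : 0 < Sp := by
    rcases hSpNonneg.lt_or_eq with h | h
    · exact h
    · exfalso
      have h0 : Sp = 0 := h.symm
      have h1 : Tendsto S atTop (nhdsWithin 0 (Set.Ioi 0)) := by
        refine tendsto_nhdsWithin_of_tendsto_nhds_of_eventually_within _ (h0 ▸ hStop) ?_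
        exact Eventually.of_forall fun t => hSpos t
      have h2 : Tendsto (fun t => Real.log (S t)) atTop atBot :=
        Real.tendsto_log_nhdsGT_zero.comp h1
      have h3 : Tendsto (fun t => γ * Real.log (S t) - β * S t) atTop atBot := by
        have h4 : Tendsto (fun t => γ * Real.log (S t)) atTop atBot :=
          h2.const_mul_atBot hγ
        have h5 : Tendsto (fun t => -(β * S t)) atTop (nhds (-(β * Sp))) :=
          (hStop.const_mul β).neg
        rw [h0] at h5
        simpa [sub_eq_add_neg] using h4.atBot_add (by simpa using h5)
      obtain ⟨t, ht⟩ := (h3.eventually (eventually_lt_atBot c)).exists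
      have := hfS t
      have := mul_pos hβ (hIpos t)
      linarith
  -- the limit of I at +∞
  have hlogtop : Tendsto (fun t => Real.log (S t)) atTop (nhds (Real.log Sp)) :=
    (Real.continuousAt_log hSpPos.ne').tendsto.comp hStop
  have hIeq : ∀ t, I t = (γ * Real.log (S t) - β * S t - c) / β := by
    intro t
    have := hfS t
    field_simp
    linarith
  have hItop : Tendsto I atTop (nhds ((γ * Real.log Sp - β * Sp - c) / β)) := by
    rw [tendsto_congr hIeq]
    exact (((hlogtop.const_mul γ).sub (hStop.const_mul β)).sub_const c).div_const β
  -- generic argument: if I is eventually ≥ k' > 0 on a ray, S escapes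
  have hLtop : (γ * Real.log Sp - β * Sp - c) / β = 0 := by
    set L : ℝ := (γ * Real.log Sp - β * Sp - c) / β with hL
    have hLnonneg : 0 ≤ L := ge_of_tendsto' hItop (fun t => (hIpos t).le) |>.trans_eq rfl
    rcases hLnonneg.lt_or_eq with hLpos | h
    · exfalso
      obtain ⟨T, hT⟩ := eventually_atTop.1 (hItop.eventually_const_lt (by linarith : L / 2 < L))
      set k : ℝ := β * Sp * (L / 2) with hk
      have hkpos : 0 < k := by positivity
      have hanti : AntitoneOn (fun t => S t + k * t) (Set.Ici T) := by
        refine antitoneOn_of_deriv_nonpos (convex_Ici T) ?_ ?_ ?_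
        · exact fun t _ => (((hS t).add ((hasDerivAt_id t).const_mul k)).continuousAt).continuousWithinAt
        · exact fun t _ => (((hS t).add ((hasDerivAt_id t).const_mul k)).differentiableAt).differentiableWithinAt
        · intro t ht
          rw [interior_Ici] at ht
          have hd : HasDerivAt (fun u : ℝ => S u + k * u) (-β * S t * I t + k * 1) t :=
            (hS t).add ((hasDerivAt_id t).const_mul k)
          rw [hd.deriv]
          have h1 : L / 2 ≤ I t := (hT t ht.le).le
          have h2 : Sp ≤ S t := hSpLe t
          have h3 : 0 < L / 2 := by linarith
          have hmul : β * Sp * (L / 2) ≤ β * S t * I t :=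
            mul_le_mul (mul_le_mul_of_nonneg_left h2 hβ.le) h1 h3.le (mul_pos hβ (hSpos t)).le
          linarith [hmul]
      set t1 : ℝ := T + S T / k + 1 with ht1
      have hTt1 : T ≤ t1 := by
        have hdv : 0 < S T / k := div_pos (hSpos T) hkpos
        rw [ht1]; linarith
      have hle := hanti (Set.self_mem_Ici) (Set.mem_Ici.2 hTt1) hTt1
      simp only at hle
      have hcan : k * (S T / k) = S T := by field_simp
      have : S t1 ≤ -k := by
        have : S t1 + k * t1 ≤ S T + k * T := hle
        rw [ht1] at this
        nlinarith
      linarith [hSpos t1]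
    · exact h.symm
  have hI0top : Tendsto I atTop (nhds 0) := hLtop ▸ hItop
  have hEqp : γ * Real.log Sp - β * Sp = c := by
    have := hLtop
    field_simp at this
    linarith
  -- the limit of I at -∞
  have hlogbot : Tendsto (fun t => Real.log (S t)) atBot (nhds (Real.log Sm)) :=
    (Real.continuousAt_log (hSpPos.trans_le (hSpLe 0 |>.trans (hSmLe 0))).ne').tendsto.comp hSbot
  have hIbot : Tendsto I atBot (nhds ((γ * Real.log Sm - β * Sm - c) / β)) := by
    rw [tendsto_congr hIeq]
    exact (((hlogbot.const_mul γ).sub (hSbot.const_mul β)).sub_const c).div_const β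
  have hLbot : (γ * Real.log Sm - β * Sm - c) / β = 0 := by
    set L : ℝ := (γ * Real.log Sm - β * Sm - c) / β with hL
    have hLnonneg : 0 ≤ L := ge_of_tendsto' hIbot (fun t => (hIpos t).le)
    rcases hLnonneg.lt_or_eq with hLpos | h
    · exfalso
      obtain ⟨T, hT⟩ := eventually_atBot.1 (hIbot.eventually_const_lt (by linarith : L / 2 < L))
      set k : ℝ := β * Sp * (L / 2) with hk
      have hkpos : 0 < k := by positivity
      have hanti : AntitoneOn (fun t => S t + k * t) (Set.Iic T) := by
        refine antitoneOn_of_deriv_nonpos (convex_Iic T) ?_ ?_ ?_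
        · exact fun t _ => (((hS t).add ((hasDerivAt_id t).const_mul k)).continuousAt).continuousWithinAt
        · exact fun t _ => (((hS t).add ((hasDerivAt_id t).const_mul k)).differentiableAt).differentiableWithinAt
        · intro t ht
          rw [interior_Iic] at ht
          have hd : HasDerivAt (fun u : ℝ => S u + k * u) (-β * S t * I t + k * 1) t :=
            (hS t).add ((hasDerivAt_id t).const_mul k)
          rw [hd.deriv]
          have h1 : L / 2 ≤ I t := (hT t ht.le).le
          have h2 : Sp ≤ S t := hSpLe t
          have h3 : 0 < L / 2 := by linarith
          have hmul : β * Sp * (L / 2) ≤ β * S t * I t :=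
            mul_le_mul (mul_le_mul_of_nonneg_left h2 hβ.le) h1 h3.le (mul_pos hβ (hSpos t)).le
          linarith [hmul]
      set t1 : ℝ := T - Sm / k - 1 with ht1
      have hTt1 : t1 ≤ T := by
        have h0 : 0 < Sm := hSpPos.trans_le ((hSpLe 0).trans (hSmLe 0))
        have hdv : 0 < Sm / k := div_pos h0 hkpos
        rw [ht1]; linarith
      have hle := hanti (Set.mem_Iic.2 hTt1) (Set.self_mem_Iic) hTt1
      simp only at hle
      have hcan : k * (Sm / k) = Sm := by field_simp
      have : Sm + k ≤ S t1 := by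
        have : S T + k * T ≤ S t1 + k * t1 := hle
        rw [ht1] at this
        nlinarith [hSpos T]
      linarith [hSmLe t1]
    · exact h.symm
  have hI0bot : Tendsto I atBot (nhds 0) := hLbot ▸ hIbot
  have hEqm : γ * Real.log Sm - β * Sm = c := by
    have := hLbot
    field_simp at this
    linarith
  -- Sp < Sm
  have hSpSm : Sp < Sm :=
    lt_of_le_of_lt (hSpLe 1) (lt_of_lt_of_le (hSanti (by norm_num : (0:ℝ) < 1)) (hSmLe 0))
  -- monotonicity of x ↦ γ log x - β x
  have hder : ∀ x : ℝ, 0 < x →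
      HasDerivAt (fun x : ℝ => γ * Real.log x - β * x) (γ * x⁻¹ - β * 1) x := fun x hx =>
    ((Real.hasDerivAt_log hx.ne').const_mul γ).sub ((hasDerivAt_id x).const_mul β)
  have hγβpos : 0 < γ / β := div_pos hγ hβ
  have hple : Sp ≤ γ / β := by
    by_contra h
    push_neg at h
    have hmono : StrictAntiOn (fun x : ℝ => γ * Real.log x - β * x) (Set.Ici (γ / β)) := by
      refine strictAntiOn_of_deriv_neg (convex_Ici _) ?_ ?_
      · exact fun x hx => ((hder x (hγβpos.trans_le hx)).continuousAt).continuousWithinAt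
      · intro x hx
        rw [interior_Ici] at hx
        have hxpos : 0 < x := hγβpos.trans hx
        rw [(hder x hxpos).deriv]
        have hinv : x * x⁻¹ = 1 := mul_inv_cancel₀ hxpos.ne'
        have hxgt : γ < β * x := by
          have := (div_lt_iff₀ hβ).1 hx
          linarith
        nlinarith [mul_pos (sub_pos.2 hxgt) (inv_pos.2 hxpos)]
    have h1 := hmono (Set.mem_Ici.2 h.le) (Set.mem_Ici.2 (h.le.trans hSpSm.le)) hSpSm
    simp only at h1
    rw [hEqp, hEqm] at h1
    exact lt_irrefl _ h1
  have hmle : γ / β ≤ Sm := by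
    by_contra h
    push_neg at h
    have hmono : StrictMonoOn (fun x : ℝ => γ * Real.log x - β * x) (Set.Ioc 0 (γ / β)) := by
      refine strictMonoOn_of_deriv_pos (convex_Ioc _ _) ?_ ?_
      · exact fun x hx => ((hder x hx.1).continuousAt).continuousWithinAt
      · intro x hx
        rw [interior_Ioc] at hx
        have hxpos : 0 < x := hx.1
        rw [(hder x hxpos).deriv]
        have hinv : x * x⁻¹ = 1 := mul_inv_cancel₀ hxpos.ne'
        have hxlt : β * x < γ := by
          have := (lt_div_iff₀ hβ).1 hx.2
          linarith
        nlinarith [mul_pos (sub_pos.2 hxlt) (inv_pos.2 hxpos)]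
    have h1 := hmono (Set.mem_Ioc.2 ⟨hSpPos, (hSpSm.trans h).le⟩)
      (Set.mem_Ioc.2 ⟨hSpPos.trans hSpSm, h.le⟩) hSpSm
    simp only at h1
    rw [hEqp, hEqm] at h1
    exact lt_irrefl _ h1
  exact ⟨Sp, Sm, hSpPos, hple, hmle, hStop.prodMk_nhds hI0top,
    hSbot.prodMk_nhds hI0bot, hEqp, hEqm⟩
end

section
/- Let β > γ > 0. For every S₀ > γ/β there exists a unique S_∞ ∈ (0, γ/β) such that γ·log S_∞ − β·S_∞ = γ·log S₀ − β·S₀. -/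
/-- For `β > γ > 0` and every `S₀ > γ/β` there is a unique `S_∞ ∈ (0, γ/β)` on the
same level set of `S ↦ γ log S - β S`. -/
theorem sir_unique_Sinfty
    (β γ : ℝ) (hγ : 0 < γ) (hβγ : γ < β) :
    ∀ S₀ : ℝ, γ / β < S₀ →
      ∃! Sinf : ℝ, Sinf ∈ Set.Ioo 0 (γ / β) ∧
        γ * Real.log Sinf - β * Sinf = γ * Real.log S₀ - β * S₀ := by
  intro S₀ hS₀
  have hβ : 0 < β := hγ.trans hβγ
  set b := γ / β with hb
  have hb0 : 0 < b := div_pos hγ hβ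
  set f : ℝ → ℝ := fun S => γ * Real.log S - β * S with hf
  have hderiv : ∀ x ∈ Set.Ioi (0:ℝ), HasDerivAt f (γ / x - β) x := by
    intro x hx
    have h1 : HasDerivAt Real.log x⁻¹ x := Real.hasDerivAt_log (ne_of_gt hx)
    have := (h1.const_mul γ).sub ((hasDerivAt_id x).const_mul β)
    simpa [hf, mul_one_div, div_eq_mul_inv, mul_comm, Pi.sub_def] using this
  have hcont : ContinuousOn f (Set.Ioi 0) := fun x hx =>
    (hderiv x hx).continuousAt.continuousWithinAt
  have hmono : StrictMonoOn f (Set.Ioc 0 b) := by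
    apply strictMonoOn_of_deriv_pos (convex_Ioc 0 b) (hcont.mono fun x hx => hx.1)
    intro x hx
    rw [interior_Ioc] at hx
    rw [(hderiv x hx.1).deriv]
    have hβx : β * x < γ := by
      calc β * x < β * b := (mul_lt_mul_iff_right₀ hβ).mpr hx.2
        _ = γ := by rw [hb]; field_simp
    have : β < γ / x := (lt_div_iff₀ hx.1).mpr (by linarith)
    linarith
  have hanti : StrictAntiOn f (Set.Ici b) := by
    apply strictAntiOn_of_deriv_neg (convex_Ici b) (hcont.mono fun x hx => hb0.trans_le hx)
    intro x hx
    rw [interior_Ici] at hx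
    rw [(hderiv x (hb0.trans hx)).deriv]
    have hβx : γ < β * x := by
      calc γ = β * b := by rw [hb]; field_simp
        _ < β * x := (mul_lt_mul_iff_right₀ hβ).mpr hx
    have : γ / x < β := (div_lt_iff₀ (hb0.trans hx)).mpr (by linarith)
    linarith
  have hc : f S₀ < f b := hanti (le_refl b) hS₀.le hS₀
  -- pick a small point a with f a < f S₀
  set a := min (b / 2) (Real.exp (f S₀ / γ)) with ha
  have ha0 : 0 < a := lt_min (half_pos hb0) (Real.exp_pos _)
  have hab : a < b := (min_le_left _ _).trans_lt (half_lt_self hb0)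
  have hfa : f a < f S₀ := by
    have hlog : Real.log a ≤ f S₀ / γ := by
      have h1 : a ≤ Real.exp (f S₀ / γ) := min_le_right _ _
      calc Real.log a ≤ Real.log (Real.exp (f S₀ / γ)) := Real.log_le_log ha0 h1
        _ = f S₀ / γ := Real.log_exp _
    have h2 : γ * Real.log a ≤ f S₀ := by
      have := mul_le_mul_of_nonneg_left hlog hγ.le
      calc γ * Real.log a ≤ γ * (f S₀ / γ) := this
        _ = f S₀ := by field_simp
    have h3 : 0 < β * a := mul_pos hβ ha0
    have : f a = γ * Real.log a - β * a := rfl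
    linarith
  -- IVT
  have hsub : Set.Icc a b ⊆ Set.Ioi 0 := fun x hx => ha0.trans_le hx.1
  have hivt := intermediate_value_Icc hab.le (hcont.mono hsub)
  have hmem : f S₀ ∈ Set.Icc (f a) (f b) := ⟨hfa.le, hc.le⟩
  obtain ⟨x, hx, hfx⟩ := hivt hmem
  have hx0 : 0 < x := ha0.trans_le hx.1
  have hxb : x < b := by
    rcases lt_or_eq_of_le hx.2 with h | h
    · exact h
    · exfalso; rw [h] at hfx; rw [hfx] at hc; exact lt_irrefl _ hc
  refine ⟨x, ⟨⟨hx0, hxb⟩, hfx⟩, ?_⟩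
  intro y ⟨⟨hy0, hyb⟩, hfy⟩
  exact hmono.injOn ⟨hy0, hyb.le⟩ ⟨hx0, hxb.le⟩ (by simp only [hf] at hfy hfx ⊢; rw [hfy, hfx])
end

section
/- Let β, γ, ξ, ε > 0 with β > γ + ε ξ, and set S_E = (γ + ε ξ)/β and I_E = ε ξ (1 − S_E)/(β S_E). Then every solution (S, I) of the fast-time SIR system with initial condition satisfying S(0) ≥ 0, I(0) > 0 and S(0) + I(0) ≤ 1, defined for all t ≥ 0, converges to the endemic equilibrium: (S(t), I(t)) → (S_E, I_E) as t → +∞. -/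
open Filter Set

private lemma mono_Ici {a : ℝ} {f f' : ℝ → ℝ}
    (hd : ∀ t ∈ Set.Ici a, HasDerivAt f (f' t) t)
    (h0 : ∀ t ∈ Set.Ici a, 0 ≤ f' t) : MonotoneOn f (Set.Ici a) :=
  monotoneOn_of_hasDerivWithinAt_nonneg (convex_Ici a)
    (fun t ht => (hd t ht).continuousAt.continuousWithinAt)
    (fun t ht => ((hd t (interior_subset ht)).hasDerivWithinAt))
    (fun t ht => h0 t (interior_subset ht))

private lemma anti_Ici {a : ℝ} {f f' : ℝ → ℝ}
    (hd : ∀ t ∈ Set.Ici a, HasDerivAt f (f' t) t)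
    (h0 : ∀ t ∈ Set.Ici a, f' t ≤ 0) : AntitoneOn f (Set.Ici a) :=
  antitoneOn_of_hasDerivWithinAt_nonpos (convex_Ici a)
    (fun t ht => (hd t ht).continuousAt.continuousWithinAt)
    (fun t ht => ((hd t (interior_subset ht)).hasDerivWithinAt))
    (fun t ht => h0 t (interior_subset ht))

private lemma const_Ici {a : ℝ} {f f' : ℝ → ℝ}
    (hd : ∀ t ∈ Set.Ici a, HasDerivAt f (f' t) t)
    (h0 : ∀ t ∈ Set.Ici a, f' t = 0) : ∀ t ∈ Set.Ici a, f t = f a := by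
  intro t ht
  have h1 := mono_Ici hd (fun t ht => (h0 t ht).ge) (self_mem_Ici) ht ht
  have h2 := anti_Ici hd (fun t ht => (h0 t ht).le) (self_mem_Ici) ht ht
  linarith



private lemma key_quad (β sm m aa x y SS II : ℝ) (hβ : 0 < β) (hsm : 0 < sm)
    (hm : 0 < m) (ha : 0 < aa)
    (haD : aa * (2 * (2 * β^2 * sm + m^2)) ≤ m * β * sm)
    (hS1 : SS ≤ 1) (hSp : 0 < SS) (hsmS : sm ≤ SS) (hIp : 0 < II) (hI1 : II ≤ 1) :
    -(m * x^2) / SS + aa * (β * II * x^2) - aa * (m * x * y) - aa * (β * SS * y^2)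
      ≤ -((m/2) * x^2 + (aa * β * sm / 2) * y^2) := by
  have h4ab : 4 * aa * β ≤ m := by
    nlinarith [mul_nonneg (mul_nonneg ha.le hm.le) hm.le, mul_pos hβ hsm,
      mul_nonneg ha.le (sq_nonneg m)]
  have hf1 : -(m * x^2) / SS ≤ -(m * x^2) := by
    rw [div_le_iff₀ hSp]
    nlinarith [mul_nonneg hm.le (sq_nonneg x)]
  have hf2 : aa * (β * II * x^2) ≤ aa * (β * x^2) := by
    nlinarith [mul_nonneg (mul_nonneg ha.le hβ.le) (sq_nonneg x)]
  have hf3 : aa * (β * sm * y^2) ≤ aa * (β * SS * y^2) := by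
    nlinarith [mul_nonneg (mul_nonneg ha.le hβ.le) (sq_nonneg y)]
  have h6 : 0 ≤ m * β * sm - aa * (2 * β^2 * sm + m^2) := by
    nlinarith [mul_nonneg ha.le (by positivity : (0:ℝ) ≤ 2 * β^2 * sm + m^2)]
  have h7 : (0:ℝ) < 2 * (m - 2 * aa * β) := by nlinarith
  have hq : 0 ≤ (m/2 - aa*β)*x^2 + aa*m*x*y + (aa*β*sm/2)*y^2 := by
    nlinarith [sq_nonneg ((m - 2*aa*β)*x + aa*m*y),
      mul_nonneg (mul_nonneg ha.le (sq_nonneg y)) h6, h7]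
  linarith [hf1, hf2, hf3, hq]

open Filter Set

-- phi helper: derivative machinery on Ioi 0
private lemma phi_f_anti : AntitoneOn (fun u : ℝ => u - 1 - Real.log u - (u-1)^2/2) (Set.Ioi 0) := by
  have hd : ∀ u ∈ interior (Set.Ioi (0:ℝ)),
      HasDerivWithinAt (fun u : ℝ => u - 1 - Real.log u - (u-1)^2/2)
        (-(u-1)^2/u) (interior (Set.Ioi (0:ℝ))) u := by
    intro u hu
    rw [interior_Ioi] at hu
    have hu0 : (u:ℝ) ≠ 0 := ne_of_gt hu
    have h : HasDerivAt (fun u : ℝ => u - 1 - Real.log u - (u-1)^2/2)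
        (1 - u⁻¹ - (↑2*(u-1)^1*1)/2) u :=
      (((hasDerivAt_id u).sub_const 1).sub (Real.hasDerivAt_log hu0)).sub
        ((((hasDerivAt_id u).sub_const 1).pow 2).div_const 2)
    refine h.hasDerivWithinAt.congr_deriv (Eq.symm ?_)
    field_simp; ring
  apply antitoneOn_of_hasDerivWithinAt_nonpos (convex_Ioi 0) ?_ hd ?_
  · intro u hu
    have hu0 : (u:ℝ) ≠ 0 := ne_of_gt hu
    exact (((continuousAt_id.sub continuousAt_const).sub (Real.continuousAt_log hu0)).sub
      (((continuousAt_id.sub continuousAt_const).pow 2).div_const 2)).continuousWithinAt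
  · intro u hu
    rw [interior_Ioi] at hu
    apply div_nonpos_of_nonpos_of_nonneg (by nlinarith [sq_nonneg (u-1)]) (le_of_lt hu)

private lemma phi_g_mono : MonotoneOn (fun u : ℝ => u - 1 - Real.log u - (u-1)^2/(2*u)) (Set.Ioi 0) := by
  have hd : ∀ u ∈ interior (Set.Ioi (0:ℝ)),
      HasDerivWithinAt (fun u : ℝ => u - 1 - Real.log u - (u-1)^2/(2*u))
        ((u-1)^2/(2*u^2)) (interior (Set.Ioi (0:ℝ))) u := by
    intro u hu
    rw [interior_Ioi] at hu
    have hu0 : (u:ℝ) ≠ 0 := ne_of_gt hu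
    have h : HasDerivAt (fun u : ℝ => u - 1 - Real.log u - (u-1)^2/(2*u))
        (1 - u⁻¹ - ((↑2*(u-1)^1*1)*(2*u) - (u-1)^2*(2*1))/(2*u)^2) u := by
      refine (((hasDerivAt_id u).sub_const 1).sub (Real.hasDerivAt_log hu0)).sub
        (HasDerivAt.div (((hasDerivAt_id u).sub_const 1).pow 2)
          ((hasDerivAt_id u).const_mul 2) (by simpa using hu0))
    refine h.hasDerivWithinAt.congr_deriv (Eq.symm ?_)
    field_simp; ring
  apply monotoneOn_of_hasDerivWithinAt_nonneg (convex_Ioi 0) ?_ hd ?_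
  · intro u hu
    have hu0 : (u:ℝ) ≠ 0 := ne_of_gt hu
    exact (((continuousAt_id.sub continuousAt_const).sub (Real.continuousAt_log hu0)).sub
      (((continuousAt_id.sub continuousAt_const).pow 2).div
        (continuousAt_const.mul continuousAt_id) (by simpa using hu0))).continuousWithinAt
  · intro u hu
    rw [interior_Ioi] at hu
    positivity

/-- φ(u) = u - 1 - log u lower bound: for 0 < u ≤ c, 1 ≤ c. -/
private lemma phi_low {u c : ℝ} (hu : 0 < u) (huc : u ≤ c) (hc : 1 ≤ c) :
    (u-1)^2/(2*c) ≤ u - 1 - Real.log u := by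
  rcases le_total u 1 with h1 | h1
  · have := phi_f_anti hu (Set.mem_Ioi.mpr one_pos) h1
    simp only [Real.log_one] at this
    have h2 : (u-1)^2/(2*c) ≤ (u-1)^2/2 := by
      apply div_le_div_of_nonneg_left (sq_nonneg _) two_pos ?_ |>.trans_eq rfl <;> linarith
    linarith
  · have := phi_g_mono (Set.mem_Ioi.mpr one_pos) (Set.mem_Ioi.mpr hu) h1
    simp only [Real.log_one] at this
    have h2 : (u-1)^2/(2*c) ≤ (u-1)^2/(2*u) := by
      apply div_le_div_of_nonneg_left (sq_nonneg _) (by linarith) (by linarith)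
    norm_num at this
    linarith

/-- φ upper bound: for 0 < c ≤ u, c ≤ 1. -/
private lemma phi_up {u c : ℝ} (hc : 0 < c) (hcu : c ≤ u) (hc1 : c ≤ 1) :
    u - 1 - Real.log u ≤ (u-1)^2/(2*c) := by
  have hu : 0 < u := lt_of_lt_of_le hc hcu
  rcases le_total u 1 with h1 | h1
  · have := phi_g_mono (Set.mem_Ioi.mpr hu) (Set.mem_Ioi.mpr one_pos) h1
    simp only [Real.log_one] at this
    norm_num at this
    have h2 : (u-1)^2/(2*u) ≤ (u-1)^2/(2*c) := by
      apply div_le_div_of_nonneg_left (sq_nonneg _) (by linarith) (by linarith)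
    linarith
  · have := phi_f_anti (Set.mem_Ioi.mpr one_pos) (Set.mem_Ioi.mpr hu) h1
    simp only [Real.log_one] at this
    have h2 : (u-1)^2/2 ≤ (u-1)^2/(2*c) := by
      apply div_le_div_of_nonneg_left (sq_nonneg _) (by linarith) (by linarith)
    linarith

/-- φ(u) ≥ -log u - 1 for u > 0 (trivial). -/
private lemma phi_log {u : ℝ} (hu : 0 < u) : -Real.log u - 1 ≤ u - 1 - Real.log u := by linarith

private lemma part_low {E v : ℝ} (hE : 0 < E) (hE1 : E ≤ 1) (hv : 0 < v) (hv1 : v ≤ 1) :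
    (v - E)^2 / 2 ≤ v - E * Real.log v - (E - E * Real.log E) := by
  have hu : 0 < v / E := div_pos hv hE
  have h := phi_low (c := 1/E) hu (by
    rw [div_le_div_iff₀ hE hE]; nlinarith) (by
    rw [le_div_iff₀ hE]; nlinarith)
  rw [Real.log_div hv.ne' hE.ne'] at h
  have h2 := mul_le_mul_of_nonneg_left h hE.le
  have key1 : E * ((v/E - 1)^2/(2*(1/E))) = (v - E)^2/2 := by field_simp
  have key2 : E * (v/E - 1 - (Real.log v - Real.log E))
      = v - E * Real.log v - (E - E * Real.log E) := by field_simp; ring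
  rw [key1, key2] at h2
  exact h2

private lemma part_up {E v c : ℝ} (hE : 0 < E) (hc : 0 < c) (hcv : c ≤ v) (hcE : c ≤ E) :
    v - E * Real.log v - (E - E * Real.log E) ≤ (v - E)^2 / (2 * c) := by
  have hv : 0 < v := lt_of_lt_of_le hc hcv
  have h := phi_up (u := v/E) (c := c/E) (div_pos hc hE) (by
    rw [div_le_div_iff₀ hE hE]; nlinarith) (by
    rw [div_le_one hE]; exact hcE)
  rw [Real.log_div hv.ne' hE.ne'] at h
  have h2 := mul_le_mul_of_nonneg_left h hE.le
  have key1 : E * ((v/E - 1)^2/(2*(c/E))) = (v - E)^2/(2*c) := by field_simp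
  have key2 : E * (v/E - 1 - (Real.log v - Real.log E))
      = v - E * Real.log v - (E - E * Real.log E) := by field_simp; ring
  rw [key1, key2] at h2
  exact h2

private lemma part_nn {E v : ℝ} (hE : 0 < E) (hv : 0 < v) :
    0 ≤ v - E * Real.log v - (E - E * Real.log E) := by
  have h := Real.log_le_sub_one_of_pos (show 0 < v/E from div_pos hv hE)
  rw [Real.log_div hv.ne' hE.ne'] at h
  have h2 := mul_le_mul_of_nonneg_left h hE.le
  have key2 : E * (v/E - 1) = v - E := by field_simp
  nlinarith

private lemma part_logb {E v : ℝ} (hv : 0 < v) :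
    E * (Real.log E - Real.log v) - E ≤ v - E * Real.log v - (E - E * Real.log E) := by
  nlinarith [hv.le]


set_option maxHeartbeats 1000000 in
/-- Global convergence to the endemic equilibrium for the fast-time SIR system
`S' = ε ξ (1 - S) - β S I`, `I' = I (β S - γ - ε ξ)` when `β > γ + ε ξ`. -/
theorem sir_fast_global_convergence
    (β γ ξ ε : ℝ) (hβ : 0 < β) (hγ : 0 < γ) (hξ : 0 < ξ) (hε : 0 < ε)
    (hR : γ + ε * ξ < β)
    (SE IE : ℝ)
    (hSE : SE = (γ + ε * ξ) / β)
    (hIE : IE = ε * ξ * (1 - SE) / (β * SE))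
    (S I : ℝ → ℝ)
    (hS : ∀ t : ℝ, 0 ≤ t → HasDerivAt S (ε * ξ * (1 - S t) - β * S t * I t) t)
    (hI : ∀ t : ℝ, 0 ≤ t → HasDerivAt I (I t * (β * S t - γ - ε * ξ)) t)
    (hS0 : 0 ≤ S 0) (hI0 : 0 < I 0) (hsum : S 0 + I 0 ≤ 1) :
    Tendsto (fun t => (S t, I t)) atTop (nhds (SE, IE)) := by
  have hμ : 0 < ε * ξ := mul_pos hε hξ
  -- continuity of S and I on the right half line, via extensions
  have hSCc : Continuous (fun s : ℝ => S (max s 0)) :=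
    continuous_iff_continuousAt.mpr fun s =>
      ContinuousAt.comp (x := s) ((hS _ (le_max_right s 0)).continuousAt) ((continuous_id.max continuous_const).continuousAt)
  have hICc : Continuous (fun s : ℝ => I (max s 0)) :=
    continuous_iff_continuousAt.mpr fun s =>
      ContinuousAt.comp (x := s) ((hI _ (le_max_right s 0)).continuousAt) ((continuous_id.max continuous_const).continuousAt)
  -- Step 1 : I positive
  have hIpos : ∀ t : ℝ, 0 ≤ t → 0 < I t := by
    set h : ℝ → ℝ := fun s => β * S (max s 0) - γ - ε * ξ with hh
    have hhc : Continuous h := by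
      exact ((continuous_const.mul hSCc).sub continuous_const).sub continuous_const
    set H : ℝ → ℝ := fun u => ∫ s in (0:ℝ)..u, h s with hH
    have hHd : ∀ t : ℝ, HasDerivAt H (h t) t := fun t =>
      (hhc.integral_hasStrictDerivAt 0 t).hasDerivAt
    have hconst := const_Ici (a := 0) (f := fun t => I t * Real.exp (-(H t)))
      (f' := fun _ => 0) ?_ (fun _ _ => rfl)
    · intro t ht
      have h0 : H 0 = 0 := intervalIntegral.integral_same
      have hc := hconst t ht
      simp only [h0, neg_zero, Real.exp_zero, mul_one] at hc
      have : I t = I 0 * Real.exp (H t) := by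
        have he : (0:ℝ) < Real.exp (-(H t)) := Real.exp_pos _
        rw [← hc]
        rw [mul_assoc, ← Real.exp_add]
        simp
      rw [this]
      positivity
    · intro t ht
      have hd := (hI t ht).mul ((hHd t).neg.exp)
      refine hd.congr_deriv (Eq.symm ?_)
      have hSmax : S (max t 0) = S t := by rw [max_eq_left ht]
      simp only [hh, hSmax]
      ring
  -- Step 2 : S + I ≤ 1
  have hsum1 : ∀ t : ℝ, 0 ≤ t → S t + I t ≤ 1 := by
    have hanti := anti_Ici (a := 0) (f := fun t => (S t + I t - 1) * Real.exp (ε * ξ * t))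
      (f' := fun t => Real.exp (ε * ξ * t) * (-(γ * I t))) ?_ ?_
    · intro t ht
      have h1 := hanti (self_mem_Ici) ht ht
      simp only [mul_zero, Real.exp_zero, mul_one] at h1
      have he : (0:ℝ) < Real.exp (ε * ξ * t) := Real.exp_pos _
      nlinarith only [h1, he, hsum]
    · intro t ht
      have hd := (((hS t ht).add (hI t ht)).sub_const 1).mul
        (((hasDerivAt_id t).const_mul (ε * ξ)).exp)
      refine hd.congr_deriv (Eq.symm ?_)
      simp only [id_eq, Pi.add_apply]
      ring
    · intro t ht
      show Real.exp (ε * ξ * t) * (-(γ * I t)) ≤ 0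
      have he : (0:ℝ) < Real.exp (ε * ξ * t) := Real.exp_pos _
      have := hIpos t ht
      nlinarith only [mul_pos he (mul_pos hγ this)]
  -- Step 3 : S nonnegative / positive
  have hSkey : ∀ t : ℝ, 0 ≤ t → ε * ξ * t ≤ S t * Real.exp (∫ s in (0:ℝ)..t, (ε * ξ + β * I (max s 0))) - S 0 := by
    set g : ℝ → ℝ := fun s => ε * ξ + β * I (max s 0) with hg
    have hgc : Continuous g := continuous_const.add (continuous_const.mul hICc)
    have hgpos : ∀ s : ℝ, 0 < g s := fun s => by
      have := hIpos (max s 0) (le_max_right s 0)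
      simp only [hg]
      nlinarith
    set A : ℝ → ℝ := fun u => ∫ s in (0:ℝ)..u, g s with hA
    have hAd : ∀ t : ℝ, HasDerivAt A (g t) t := fun t =>
      (hgc.integral_hasStrictDerivAt 0 t).hasDerivAt
    have hAc : Continuous A := continuous_iff_continuousAt.mpr fun t => (hAd t).continuousAt
    have hAnn : ∀ t : ℝ, 0 ≤ t → 0 ≤ A t := by
      intro t ht
      exact intervalIntegral.integral_nonneg ht (fun s _ => (hgpos s).le)
    set B : ℝ → ℝ := fun u => ∫ s in (0:ℝ)..u, ε * ξ * Real.exp (A s) with hB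
    have hBintc : Continuous (fun s => ε * ξ * Real.exp (A s)) :=
      continuous_const.mul (Real.continuous_exp.comp hAc)
    have hBd : ∀ t : ℝ, HasDerivAt B (ε * ξ * Real.exp (A t)) t := fun t =>
      (hBintc.integral_hasStrictDerivAt 0 t).hasDerivAt
    have hconst := const_Ici (a := 0) (f := fun t => S t * Real.exp (A t) - B t)
      (f' := fun _ => 0) ?_ (fun _ _ => rfl)
    · intro t ht
      have hc := hconst t ht
      have hA0 : A 0 = 0 := intervalIntegral.integral_same
      have hB0 : B 0 = 0 := intervalIntegral.integral_same
      simp only [hA0, hB0, Real.exp_zero, mul_one, sub_zero] at hc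
      have hBlow : ε * ξ * t ≤ B t := by
        have h1 : ∀ s ∈ Set.Icc (0:ℝ) t, ε * ξ ≤ ε * ξ * Real.exp (A s) := by
          intro s hs
          have h2 : (1:ℝ) ≤ Real.exp (A s) := Real.one_le_exp (hAnn s hs.1)
          nlinarith
        have h3 := intervalIntegral.integral_mono_on (μ := MeasureTheory.volume)
          (f := fun _ => ε * ξ) (g := fun s => ε * ξ * Real.exp (A s)) ht
          (intervalIntegrable_const) (hBintc.intervalIntegrable 0 t) h1
        have h4 : (∫ _ in (0:ℝ)..t, ε * ξ) ≤ B t := h3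
        rw [intervalIntegral.integral_const, sub_zero, smul_eq_mul] at h4
        nlinarith [h4]
      have : S t * Real.exp (A t) - B t = S 0 := hc
      linarith
    · intro t ht
      have hmax : max t 0 = t := max_eq_left ht
      have hd := ((hS t ht).mul ((hAd t).exp)).sub (hBd t)
      refine hd.congr_deriv (Eq.symm ?_)
      simp only [hg, hmax]
      ring
  have hSnn : ∀ t : ℝ, 0 ≤ t → 0 ≤ S t := by
    intro t ht
    have h1 := hSkey t ht
    have he : (0:ℝ) < Real.exp (∫ s in (0:ℝ)..t, (ε * ξ + β * I (max s 0))) := Real.exp_pos _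
    nlinarith only [h1, he, hS0, mul_nonneg hμ.le ht]
  have hSpos : ∀ t : ℝ, 0 < t → 0 < S t := by
    intro t ht
    have h1 := hSkey t ht.le
    have he : (0:ℝ) < Real.exp (∫ s in (0:ℝ)..t, (ε * ξ + β * I (max s 0))) := Real.exp_pos _
    nlinarith only [h1, he, hS0, mul_pos hμ ht]
  -- Step 4 : I ≤ 1, S ≤ 1
  have hIle : ∀ t : ℝ, 0 ≤ t → I t ≤ 1 := fun t ht => by
    have := hsum1 t ht; have := hSnn t ht; linarith
  have hSle : ∀ t : ℝ, 0 ≤ t → S t ≤ 1 := fun t ht => by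
    have := hsum1 t ht; have := hIpos t ht; linarith
  -- Step 5 : persistence of S
  have hsm : ∀ t : ℝ, 1 ≤ t → min (S 1) (ε * ξ / (ε * ξ + β)) ≤ S t := by
    set k : ℝ := ε * ξ + β with hk
    have hkpos : 0 < k := by positivity
    set c : ℝ := ε * ξ / k with hc
    have hmono := mono_Ici (a := 0) (f := fun t => (S t - c) * Real.exp (k * t))
      (f' := fun t => Real.exp (k * t) * (β * S t * (1 - I t))) ?_ ?_
    · intro t ht
      have h01 : (0:ℝ) ∈ Set.Ici (0:ℝ) := self_mem_Ici
      have h11 : (1:ℝ) ∈ Set.Ici (0:ℝ) := by norm_num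
      have ht0 : t ∈ Set.Ici (0:ℝ) := by simp only [Set.mem_Ici]; linarith
      have hG := hmono h11 ht0 ht
      simp only at hG
      have hE1 : (0:ℝ) < Real.exp (k * 1) := Real.exp_pos _
      have hEt : (0:ℝ) < Real.exp (k * t) := Real.exp_pos _
      have hEle : Real.exp (k * 1) ≤ Real.exp (k * t) := by
        apply Real.exp_le_exp.mpr
        nlinarith only [hkpos, ht]
      rcases le_total c (S 1) with hcase | hcase
      · have h2 : 0 ≤ (S 1 - c) * Real.exp (k * 1) := by
          nlinarith only [hcase, hE1]
        have h3 : 0 ≤ S t - c := by nlinarith only [hG, h2, hEt]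
        have : min (S 1) c ≤ c := min_le_right _ _
        linarith
      · by_contra hcon
        push_neg at hcon
        have h4 : min (S 1) c ≤ S 1 := min_le_left _ _
        have h5 : S t < S 1 := by linarith
        have h6 : S t - c < 0 := by linarith
        have h7 : (S t - c) * Real.exp (k * t) ≤ (S t - c) * Real.exp (k * 1) := by
          nlinarith only [h6, hEle]
        nlinarith only [hG, h7, hE1, h5]
    · intro t ht
      have hd := ((hS t ht).sub_const c).mul (((hasDerivAt_id t).const_mul k).exp)
      refine hd.congr_deriv (Eq.symm ?_)
      simp only [id_eq, hk, hc]
      have h9 : ε * ξ / (ε * ξ + β) * (ε * ξ + β) = ε * ξ := by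
        field_simp
      linear_combination (Real.exp ((ε * ξ + β) * t)) * h9
    · intro t ht
      show 0 ≤ Real.exp (k * t) * (β * S t * (1 - I t))
      have h1 := hSnn t ht
      have h2 := hIle t ht
      have he : (0:ℝ) < Real.exp (k * t) := Real.exp_pos _
      exact mul_nonneg he.le (mul_nonneg (mul_nonneg hβ.le h1) (by linarith))
  -- equilibrium constants
  have hSEpos : 0 < SE := by rw [hSE]; positivity
  have hSE1 : SE < 1 := by rw [hSE, div_lt_one hβ]; linarith
  have e1 : β * SE = γ + ε * ξ := by rw [hSE]; field_simp
  have hIEpos : 0 < IE := by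
    rw [hIE]; apply div_pos; nlinarith only [hμ, hSE1]; positivity
  have e2 : β * SE * IE = ε * ξ * (1 - SE) := by
    rw [hIE]; field_simp
  have hIE1 : IE < 1 := by
    nlinarith only [e1, e2, mul_pos hβ hSEpos, mul_pos hμ hSEpos, hγ]
  obtain ⟨sm, hsmdef⟩ : ∃ x : ℝ, x = min (S 1) (ε * ξ / (ε * ξ + β)) := ⟨_, rfl⟩
  rw [← hsmdef] at hsm
  have hsmpos : 0 < sm := by rw [hsmdef]; exact lt_min (hSpos 1 one_pos) (by positivity)
  obtain ⟨m, hmdef⟩ : ∃ x : ℝ, x = ε * ξ + β * IE := ⟨_, rfl⟩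
  have hmpos : 0 < m := by rw [hmdef]; positivity
  have hDpos : (0:ℝ) < 2 * β ^ 2 * sm + m ^ 2 := by positivity
  obtain ⟨a, hadef⟩ : ∃ x : ℝ,
      x = min (1/4 : ℝ) (m * β * sm / (2 * (2 * β ^ 2 * sm + m ^ 2))) := ⟨_, rfl⟩
  have hapos : 0 < a := by rw [hadef]; exact lt_min (by norm_num) (by positivity)
  have ha4 : a ≤ 1/4 := by rw [hadef]; exact min_le_left _ _
  have haD : a * (2 * (2 * β ^ 2 * sm + m ^ 2)) ≤ m * β * sm := by
    have h1 : a ≤ m * β * sm / (2 * (2 * β ^ 2 * sm + m ^ 2)) := by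
      rw [hadef]; exact min_le_right _ _
    have h2 : (0:ℝ) < 2 * (2 * β ^ 2 * sm + m ^ 2) := by linarith
    calc a * (2 * (2 * β ^ 2 * sm + m ^ 2))
        ≤ (m * β * sm / (2 * (2 * β ^ 2 * sm + m ^ 2))) * (2 * (2 * β ^ 2 * sm + m ^ 2)) := by
          exact mul_le_mul_of_nonneg_right h1 h2.le
      _ = m * β * sm := by field_simp
  -- derivative of the Lyapunov function W
  have hW' : ∀ t ∈ Set.Ici (1:ℝ), HasDerivAt
      (fun t => S t - SE * Real.log (S t) + I t - IE * Real.log (I t)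
        + a * ((S t - SE) * (I t - IE)))
      (-(m * (S t - SE)^2) / S t + a * (β * I t * (S t - SE)^2)
        - a * (m * (S t - SE) * (I t - IE)) - a * (β * S t * (I t - IE)^2)) t := by
    intro t ht
    have ht1 : (1:ℝ) ≤ t := ht
    have ht0 : (0:ℝ) ≤ t := by linarith
    have hSp : 0 < S t := hSpos t (by linarith)
    have hIp : 0 < I t := hIpos t ht0
    have hdS := hS t ht0
    have hdI := hI t ht0
    have hd := (((hdS.sub ((hdS.log hSp.ne').const_mul SE)).add hdI).sub
      ((hdI.log hIp.ne').const_mul IE)).add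
      (((hdS.sub_const SE).mul (hdI.sub_const IE)).const_mul a)
    refine hd.congr_deriv (Eq.symm ?_)
    have hid : I t * (β * S t - γ - ε * ξ) = β * I t * (S t - SE) := by
      linear_combination I t * e1
    have hsd : ε * ξ * (1 - S t) - β * S t * I t
        = -(m * (S t - SE)) - β * S t * (I t - IE) := by
      simp only [hmdef]; linear_combination -e2
    rw [hsd, hid]
    field_simp
    ring
  -- key differential inequality
  have hWdle : ∀ t ∈ Set.Ici (1:ℝ),
      -(m * (S t - SE)^2) / S t + a * (β * I t * (S t - SE)^2)
        - a * (m * (S t - SE) * (I t - IE)) - a * (β * S t * (I t - IE)^2)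
      ≤ -((m/2) * (S t - SE)^2 + (a * β * sm / 2) * (I t - IE)^2) := by
    intro t ht
    have ht1 : (1:ℝ) ≤ t := ht
    have ht0 : (0:ℝ) ≤ t := by linarith
    exact key_quad β sm m a (S t - SE) (I t - IE) (S t) (I t) hβ hsmpos hmpos hapos haD
      (hSle t ht0) (hSpos t (by linarith)) (hsm t ht1) (hIpos t ht0) (hIle t ht0)
  -- W is antitone on [1, ∞)
  have hWanti : AntitoneOn
      (fun t => S t - SE * Real.log (S t) + I t - IE * Real.log (I t)
        + a * ((S t - SE) * (I t - IE))) (Set.Ici 1) := by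
    apply anti_Ici hW'
    intro t ht
    have h1 := hWdle t ht
    have h2 : 0 ≤ (m/2) * (S t - SE)^2 := mul_nonneg (by linarith) (sq_nonneg _)
    have h3 : 0 ≤ (a * β * sm / 2) * (I t - IE)^2 := by positivity
    linarith
  obtain ⟨Wmin, hWmin⟩ : ∃ x : ℝ, x = SE - SE * Real.log SE + IE - IE * Real.log IE := ⟨_, rfl⟩
  obtain ⟨W1, hW1⟩ : ∃ x : ℝ, x = S 1 - SE * Real.log (S 1) + I 1 - IE * Real.log (I 1)
    + a * ((S 1 - SE) * (I 1 - IE)) := ⟨_, rfl⟩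
  -- pointwise bounds on x and y
  have hxyb : ∀ t : ℝ, 1 ≤ t → -1 ≤ S t - SE ∧ S t - SE ≤ 1 ∧ -1 ≤ I t - IE ∧ I t - IE ≤ 1 := by
    intro t ht
    have ht0 : (0:ℝ) ≤ t := by linarith
    have := hSnn t ht0; have := hSle t ht0; have := (hIpos t ht0); have := hIle t ht0
    refine ⟨by linarith, by linarith, by linarith, by linarith⟩
  -- uniform eventual lower bound on I
  obtain ⟨K, hK⟩ : ∃ x : ℝ, x = (W1 - Wmin + a) / IE + 1 := ⟨_, rfl⟩
  obtain ⟨im, him⟩ : ∃ x : ℝ, x = Real.exp (Real.log IE - K) := ⟨_, rfl⟩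
  have himpos : 0 < im := by rw [him]; exact Real.exp_pos _
  have himle : ∀ t : ℝ, 1 ≤ t → im ≤ I t := by
    intro t ht
    have ht0 : (0:ℝ) ≤ t := by linarith
    have hSp : 0 < S t := hSpos t (by linarith)
    have hIp : 0 < I t := hIpos t ht0
    obtain ⟨hx1, hx2, hy1, hy2⟩ := hxyb t ht
    have hWt : (fun t => S t - SE * Real.log (S t) + I t - IE * Real.log (I t)
        + a * ((S t - SE) * (I t - IE))) t
        ≤ (fun t => S t - SE * Real.log (S t) + I t - IE * Real.log (I t)
        + a * ((S t - SE) * (I t - IE))) 1 := hWanti self_mem_Ici ht ht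
    simp only [] at hWt
    have haxy : -a ≤ a * ((S t - SE) * (I t - IE)) := by
      have q1 : 0 ≤ a * ((1 - (S t - SE)) * (1 - (I t - IE))) :=
        mul_nonneg hapos.le (mul_nonneg (by linarith) (by linarith))
      have q2 : 0 ≤ a * ((1 + (S t - SE)) * (1 + (I t - IE))) :=
        mul_nonneg hapos.le (mul_nonneg (by linarith) (by linarith))
      nlinarith only [q1, q2]
    have hSpart := part_nn hSEpos hSp
    have hIlow := part_logb (E := IE) hIp
    have h8 : (Real.log IE - Real.log (I t) - 1) * IE ≤ W1 - Wmin + a := by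
      rw [hW1, hWmin]
      linarith only [hSpart, hIlow, haxy, hWt]
    have h9 : Real.log IE - Real.log (I t) - 1 ≤ (W1 - Wmin + a) / IE :=
      (le_div_iff₀ hIEpos).mpr h8
    calc im = Real.exp (Real.log IE - K) := by rw [him]
      _ ≤ Real.exp (Real.log (I t)) := Real.exp_le_exp.mpr (by rw [hK]; linarith)
      _ = I t := Real.exp_log hIp
  -- quadratic sandwich for U = W - Wmin
  obtain ⟨cS, hcS⟩ : ∃ x : ℝ, x = min sm SE := ⟨_, rfl⟩
  have hcSpos : 0 < cS := by rw [hcS]; exact lt_min hsmpos hSEpos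
  obtain ⟨cI, hcI⟩ : ∃ x : ℝ, x = min im IE := ⟨_, rfl⟩
  have hcIpos : 0 < cI := by rw [hcI]; exact lt_min himpos hIEpos
  obtain ⟨CC, hCC⟩ : ∃ x : ℝ, x = 1/(2*cS) + 1/(2*cI) + a := ⟨_, rfl⟩
  have hCCpos : 0 < CC := by rw [hCC]; positivity
  have hUup : ∀ t : ℝ, 1 ≤ t →
      S t - SE * Real.log (S t) + I t - IE * Real.log (I t)
        + a * ((S t - SE) * (I t - IE)) - Wmin
      ≤ CC * ((S t - SE)^2 + (I t - IE)^2) := by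
    intro t ht
    have ht0 : (0:ℝ) ≤ t := by linarith
    have hSp : 0 < S t := hSpos t (by linarith)
    have hIp : 0 < I t := hIpos t ht0
    have hcS1 : cS ≤ S t := by rw [hcS]; exact le_trans (min_le_left _ _) (hsm t ht)
    have hcS2 : cS ≤ SE := by rw [hcS]; exact min_le_right sm SE
    have hcI1 : cI ≤ I t := by rw [hcI]; exact le_trans (min_le_left _ _) (himle t ht)
    have hcI2 : cI ≤ IE := by rw [hcI]; exact min_le_right im IE
    have h1 := part_up hSEpos hcSpos hcS1 hcS2
    have h2 := part_up hIEpos hcIpos hcI1 hcI2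
    have h3 : a * ((S t - SE) * (I t - IE))
        ≤ a * ((S t - SE)^2 + (I t - IE)^2) := by
      nlinarith only [mul_nonneg hapos.le (sq_nonneg ((S t - SE) - (I t - IE))),
        mul_nonneg hapos.le (sq_nonneg (S t - SE)),
        mul_nonneg hapos.le (sq_nonneg (I t - IE))]
    have h4 : 0 ≤ 1/(2*cS) * (I t - IE)^2 := by positivity
    have h5 : 0 ≤ 1/(2*cI) * (S t - SE)^2 := by positivity
    have e1' : (S t - SE)^2/(2*cS) = 1/(2*cS) * (S t - SE)^2 := by ring
    have e2' : (I t - IE)^2/(2*cI) = 1/(2*cI) * (I t - IE)^2 := by ring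
    rw [e1'] at h1; rw [e2'] at h2
    rw [hCC, hWmin]
    linarith only [h1, h2, h3, h4, h5]
  have hUlow : ∀ t : ℝ, 1 ≤ t →
      ((S t - SE)^2 + (I t - IE)^2) / 4
      ≤ S t - SE * Real.log (S t) + I t - IE * Real.log (I t)
        + a * ((S t - SE) * (I t - IE)) - Wmin := by
    intro t ht
    have ht0 : (0:ℝ) ≤ t := by linarith
    have hSp : 0 < S t := hSpos t (by linarith)
    have hIp : 0 < I t := hIpos t ht0
    have h1 := part_low hSEpos hSE1.le hSp (hSle t ht0)
    have h2 := part_low hIEpos hIE1.le hIp (hIle t ht0)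
    have h3 : -(((S t - SE)^2 + (I t - IE)^2) / 8) ≤ a * ((S t - SE) * (I t - IE)) := by
      nlinarith only [mul_nonneg hapos.le (sq_nonneg ((S t - SE) + (I t - IE))),
        mul_nonneg (by linarith : (0:ℝ) ≤ 1/4 - a)
          (add_nonneg (sq_nonneg (S t - SE)) (sq_nonneg (I t - IE)))]
    rw [hWmin]
    linarith only [h1, h2, h3, sq_nonneg (S t - SE), sq_nonneg (I t - IE)]
  -- exponential decay of U via Gronwall
  obtain ⟨cmin, hcmin⟩ : ∃ x : ℝ, x = min (m/2) (a*β*sm/2) := ⟨_, rfl⟩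
  have hcminpos : 0 < cmin := by rw [hcmin]; exact lt_min (by linarith) (by positivity)
  obtain ⟨lam, hlam⟩ : ∃ x : ℝ, x = cmin / CC := ⟨_, rfl⟩
  have hlampos : 0 < lam := by rw [hlam]; exact div_pos hcminpos hCCpos
  have hlamCC : CC * lam = cmin := by rw [hlam]; field_simp
  have hFanti : AntitoneOn
      (fun t => (S t - SE * Real.log (S t) + I t - IE * Real.log (I t)
        + a * ((S t - SE) * (I t - IE)) - Wmin) * Real.exp (lam * (t - 1))) (Set.Ici 1) := by
    apply anti_Ici (f' := fun t =>
      (-(m * (S t - SE)^2) / S t + a * (β * I t * (S t - SE)^2)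
        - a * (m * (S t - SE) * (I t - IE)) - a * (β * S t * (I t - IE)^2))
        * Real.exp (lam * (t - 1))
      + (S t - SE * Real.log (S t) + I t - IE * Real.log (I t)
        + a * ((S t - SE) * (I t - IE)) - Wmin) * (Real.exp (lam * (t - 1)) * (lam * 1)))
    · intro t ht
      exact ((hW' t ht).sub_const Wmin).mul
        ((((hasDerivAt_id t).sub_const 1).const_mul lam).exp)
    · intro t ht
      have ht1 : (1:ℝ) ≤ t := ht
      have hee : 0 < Real.exp (lam * (t - 1)) := Real.exp_pos _
      have hq1 : -((m/2) * (S t - SE)^2 + (a * β * sm / 2) * (I t - IE)^2)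
          ≤ -(cmin * ((S t - SE)^2 + (I t - IE)^2)) := by
        have t1 : cmin * (S t - SE)^2 ≤ (m/2) * (S t - SE)^2 :=
          mul_le_mul_of_nonneg_right (by rw [hcmin]; exact min_le_left _ _) (sq_nonneg _)
        have t2 : cmin * (I t - IE)^2 ≤ (a*β*sm/2) * (I t - IE)^2 :=
          mul_le_mul_of_nonneg_right (by rw [hcmin]; exact min_le_right _ _) (sq_nonneg _)
        linarith only [t1, t2]
      have h1 := le_trans (hWdle t ht) hq1
      have h2 : (S t - SE * Real.log (S t) + I t - IE * Real.log (I t)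
          + a * ((S t - SE) * (I t - IE)) - Wmin) * lam
          ≤ cmin * ((S t - SE)^2 + (I t - IE)^2) := by
        have h5 := mul_le_mul_of_nonneg_right (hUup t ht1) hlampos.le
        have heq : CC * ((S t - SE)^2 + (I t - IE)^2) * lam
            = cmin * ((S t - SE)^2 + (I t - IE)^2) := by
          rw [← hlamCC]; ring
        linarith only [h5, heq]
      have key : (-(m * (S t - SE)^2) / S t + a * (β * I t * (S t - SE)^2)
            - a * (m * (S t - SE) * (I t - IE)) - a * (β * S t * (I t - IE)^2))
            * Real.exp (lam * (t - 1))
          + (S t - SE * Real.log (S t) + I t - IE * Real.log (I t)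
            + a * ((S t - SE) * (I t - IE)) - Wmin) * (Real.exp (lam * (t - 1)) * (lam * 1))
          = ((-(m * (S t - SE)^2) / S t + a * (β * I t * (S t - SE)^2)
            - a * (m * (S t - SE) * (I t - IE)) - a * (β * S t * (I t - IE)^2))
          + (S t - SE * Real.log (S t) + I t - IE * Real.log (I t)
            + a * ((S t - SE) * (I t - IE)) - Wmin) * lam) * Real.exp (lam * (t - 1)) := by
        ring
      rw [key]
      exact mul_nonpos_iff.mpr (Or.inr ⟨by linarith only [h1, h2], hee.le⟩)
  -- final bound
  have hfin : ∀ t : ℝ, 1 ≤ t → (S t - SE)^2 + (I t - IE)^2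
      ≤ 4 * (W1 - Wmin) * Real.exp (-(lam * (t - 1))) := by
    intro t ht
    have hee : 0 < Real.exp (lam * (t - 1)) := Real.exp_pos _
    have hFt := hFanti self_mem_Ici ht ht
    simp only [] at hFt
    rw [sub_self, mul_zero, Real.exp_zero, mul_one] at hFt
    have hlow := hUlow t ht
    have h3 : ((S t - SE)^2 + (I t - IE)^2) * Real.exp (lam * (t - 1))
        ≤ 4 * (W1 - Wmin) := by
      rw [hW1]
      linarith only [mul_le_mul_of_nonneg_right hlow hee.le, hFt]
    rw [Real.exp_neg, ← div_eq_mul_inv]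
    rw [le_div_iff₀ hee]
    linarith only [h3]
  -- limits
  have hexp0 : Filter.Tendsto (fun t : ℝ => 4 * (W1 - Wmin) * Real.exp (-(lam * (t - 1))))
      Filter.atTop (nhds 0) := by
    have h1 : Filter.Tendsto (fun t : ℝ => lam * (t - 1)) Filter.atTop Filter.atTop := by
      apply Filter.Tendsto.const_mul_atTop hlampos
      simpa [sub_eq_add_neg] using Filter.tendsto_atTop_add_const_right Filter.atTop (-1 : ℝ)
        Filter.tendsto_id
    have h2 : Filter.Tendsto (fun t : ℝ => Real.exp (-(lam * (t - 1)))) Filter.atTop (nhds 0) :=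
      Real.tendsto_exp_atBot.comp (Filter.tendsto_neg_atTop_atBot.comp h1)
    simpa using h2.const_mul (4 * (W1 - Wmin))
  have hsqS : Filter.Tendsto (fun t => (S t - SE)^2) Filter.atTop (nhds 0) := by
    apply squeeze_zero' (Filter.Eventually.of_forall fun t => sq_nonneg _) ?_ hexp0
    filter_upwards [Filter.eventually_ge_atTop 1] with t ht
    linarith only [hfin t ht, sq_nonneg (I t - IE)]
  have hsqI : Filter.Tendsto (fun t => (I t - IE)^2) Filter.atTop (nhds 0) := by
    apply squeeze_zero' (Filter.Eventually.of_forall fun t => sq_nonneg _) ?_ hexp0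
    filter_upwards [Filter.eventually_ge_atTop 1] with t ht
    linarith only [hfin t ht, sq_nonneg (S t - SE)]
  have hS_t : Filter.Tendsto (fun t => S t - SE) Filter.atTop (nhds 0) := by
    rw [tendsto_zero_iff_abs_tendsto_zero]
    have h := hsqS.sqrt
    simpa [Real.sqrt_sq_eq_abs, Function.comp_def] using h
  have hI_t : Filter.Tendsto (fun t => I t - IE) Filter.atTop (nhds 0) := by
    rw [tendsto_zero_iff_abs_tendsto_zero]
    have h := hsqI.sqrt
    simpa [Real.sqrt_sq_eq_abs, Function.comp_def] using h
  have hStend : Filter.Tendsto S Filter.atTop (nhds SE) := by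
    have := hS_t.add_const SE
    simpa using this
  have hItend : Filter.Tendsto I Filter.atTop (nhds IE) := by
    have := hI_t.add_const IE
    simpa using this
  exact hStend.prodMk_nhds hItend
end

section
/- Let R₀ > 1 and let u₀ ∈ (−1, 0). Then there exists a unique p ∈ (0, R₀ − 1) such that u₀ − p − (R₀ − 1)·log((R₀ − 1 − p)/(R₀ − 1 − u₀)) = 0. (This p is the entry–exit image p₀(u₀), characterized by the vanishing of the entry–exit integral ∫_{u₀}^{p} u/(R₀ − 1 − u) du.) -/
/-- Existence and uniqueness of the entry–exit image `p₀(u₀)` for the SIR model. -/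
theorem entry_exit_unique_exit
    (R₀ : ℝ) (hR₀ : 1 < R₀) (u₀ : ℝ) (hu₀ : u₀ ∈ Set.Ioo (-1 : ℝ) 0) :
    ∃! p : ℝ, p ∈ Set.Ioo (0 : ℝ) (R₀ - 1) ∧
      u₀ - p - (R₀ - 1) * Real.log ((R₀ - 1 - p) / (R₀ - 1 - u₀)) = 0 := by
  obtain ⟨hu1, hu2⟩ := hu₀
  set c := R₀ - 1 with hc_def
  have hc : 0 < c := by simp only [hc_def]; linarith
  have hcu : 0 < c - u₀ := by linarith
  set F : ℝ → ℝ := fun p => u₀ - p - c * Real.log (c - p) + c * Real.log (c - u₀) with hF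
  have hFf : ∀ p ∈ Set.Ico (0:ℝ) c,
      u₀ - p - c * Real.log ((c - p) / (c - u₀)) = F p := by
    intro p hp
    have h1 : (0:ℝ) < c - p := by linarith [hp.2]
    simp only [hF]
    rw [Real.log_div (ne_of_gt h1) (ne_of_gt hcu)]
    ring
  have hcont : ContinuousOn F (Set.Ico 0 c) := by
    have hlog : ContinuousOn (fun p : ℝ => Real.log (c - p)) (Set.Ico 0 c) :=
      ContinuousOn.log (by fun_prop) (fun p hp => by
        have := hp.2; exact ne_of_gt (by linarith))
    exact (((continuousOn_const.sub continuousOn_id).sub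
      (continuousOn_const.mul hlog)).add continuousOn_const)
  have hmono : StrictMonoOn F (Set.Ico 0 c) := by
    apply strictMonoOn_of_deriv_pos (convex_Ico 0 c) hcont
    intro x hx
    rw [interior_Ico] at hx
    have h1 : (0:ℝ) < c - x := by linarith [hx.2]
    have hlog : HasDerivAt (fun p : ℝ => Real.log (c - p)) ((c - x)⁻¹ * (-1)) x :=
      (Real.hasDerivAt_log (ne_of_gt h1)).comp x ((hasDerivAt_id x).const_sub c)
    have hD : HasDerivAt F (0 - 1 - c * ((c - x)⁻¹ * (-1)) + 0) x :=
      (((hasDerivAt_const x u₀).sub (hasDerivAt_id x)).sub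
        (hlog.const_mul c)).add (hasDerivAt_const x (c * Real.log (c - u₀)))
    rw [hD.deriv]
    have : 0 - 1 - c * ((c - x)⁻¹ * (-1)) + 0 = x / (c - x) := by
      field_simp; ring
    rw [this]
    exact div_pos hx.1 h1
  -- point q with F q > 0
  set q : ℝ := c - (c - u₀) * Real.exp ((u₀ - c) / c) with hq_def
  have hq_lt : q < c := by
    have h0 : 0 < (c - u₀) * Real.exp ((u₀ - c) / c) := by positivity
    simp only [hq_def]; linarith
  have hq_pos : 0 < q := by
    have ht : (c - u₀) / c < Real.exp ((c - u₀) / c) := by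
      have := Real.add_one_le_exp ((c - u₀) / c)
      linarith
    have h2 : (c - u₀) * Real.exp ((u₀ - c) / c) < c := by
      have h3 : Real.exp ((u₀ - c) / c) = (Real.exp ((c - u₀) / c))⁻¹ := by
        rw [← Real.exp_neg]; ring_nf
      rw [h3]
      rw [mul_inv_lt_iff₀ (Real.exp_pos _)]
      calc c - u₀ = c * ((c - u₀) / c) := by field_simp
        _ < c * Real.exp ((c - u₀) / c) := by
            exact mul_lt_mul_of_pos_left ht hc
    simp only [hq_def]; linarith
  have hFq : 0 < F q := by
    have hcq : c - q = (c - u₀) * Real.exp ((u₀ - c) / c) := by simp [hq_def]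
    have hlogcq : Real.log (c - q) = Real.log (c - u₀) + (u₀ - c) / c := by
      rw [hcq, Real.log_mul (ne_of_gt hcu) (ne_of_gt (Real.exp_pos _)), Real.log_exp]
    simp only [hF]
    rw [hlogcq]
    have : u₀ - q - c * (Real.log (c - u₀) + (u₀ - c) / c) + c * Real.log (c - u₀)
        = c - q := by field_simp; ring
    rw [this]
    linarith
  have hF0 : F 0 < 0 := by
    have hx1 : (1:ℝ) < (c - u₀) / c := by
      rw [lt_div_iff₀ hc]; linarith
    have hlt : Real.log ((c - u₀) / c) < (c - u₀) / c - 1 :=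
      Real.log_lt_sub_one_of_pos (by positivity) (ne_of_gt hx1)
    have hlog0 : Real.log (c - u₀) - Real.log c = Real.log ((c - u₀) / c) := by
      rw [Real.log_div (ne_of_gt hcu) (ne_of_gt hc)]
    have hval : (c - u₀) / c - 1 = -u₀ / c := by field_simp; ring
    simp only [hF, sub_zero]
    have : Real.log (c - u₀) - Real.log c < -u₀ / c := by
      rw [hlog0]; rw [hval] at hlt; exact hlt
    have h4 : c * (Real.log (c - u₀) - Real.log c) < c * (-u₀ / c) :=
      mul_lt_mul_of_pos_left this hc
    have h5 : c * (-u₀ / c) = -u₀ := by field_simp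
    nlinarith
  -- existence via IVT
  have hsub : Set.Icc (0:ℝ) q ⊆ Set.Ico 0 c := fun x hx => ⟨hx.1, lt_of_le_of_lt hx.2 hq_lt⟩
  have hIVT := intermediate_value_Icc (le_of_lt hq_pos) (hcont.mono hsub)
  have hmem : (0:ℝ) ∈ Set.Icc (F 0) (F q) := ⟨le_of_lt hF0, le_of_lt hFq⟩
  obtain ⟨p, hp_mem, hp_root⟩ := hIVT hmem
  have hp_ico : p ∈ Set.Ico (0:ℝ) c := hsub hp_mem
  have hp_pos : 0 < p := by
    rcases lt_or_eq_of_le hp_mem.1 with h | h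
    · exact h
    · exfalso; rw [← h] at hp_root; linarith
  have hp_ioo : p ∈ Set.Ioo (0:ℝ) c := ⟨hp_pos, hp_ico.2⟩
  refine ⟨p, ⟨hp_ioo, ?_⟩, ?_⟩
  · rw [hFf p hp_ico]; exact hp_root
  · rintro y ⟨hy_mem, hy_root⟩
    have hy_ico : y ∈ Set.Ico (0:ℝ) c := ⟨le_of_lt hy_mem.1, hy_mem.2⟩
    rw [hFf y hy_ico] at hy_root
    exact hmono.injOn hy_ico hp_ico (by rw [hy_root, hp_root])
end

section
/- Let 0 < a < b < 1. Define F(x) = x − a + (1 − b)·log((1 − x)/(1 − a)) and G(x) = x − a + b·log(a/x). If x* ∈ (a, 1) satisfies F(x*) = 0, then G(x*) < 0. -/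
lemma log_gt_aux (y : ℝ) (hy : 1 < y) : 2 * (y - 1) / (y + 1) < Real.log y := by
  have h : StrictMonoOn (fun y : ℝ => Real.log y - 2 * (y - 1) / (y + 1)) (Set.Ici 1) := by
    apply strictMonoOn_of_deriv_pos (convex_Ici 1)
    · apply ContinuousOn.sub
      · exact Real.continuousOn_log.mono (by
          intro z hz
          simp only [Set.mem_Ici, Set.mem_compl_iff, Set.mem_singleton_iff] at hz ⊢
          intro h; linarith)
      · exact ContinuousOn.div (by fun_prop) (by fun_prop)
          (fun z hz => by simp only [Set.mem_Ici] at hz; intro h; linarith)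
    · intro z hz
      rw [interior_Ici] at hz
      have hz1 : (1:ℝ) < z := hz
      have hz0 : (0:ℝ) < z := by linarith
      have hzne : z + 1 ≠ 0 := by linarith
      have h1 : HasDerivAt Real.log z⁻¹ z := Real.hasDerivAt_log (ne_of_gt hz0)
      have hu : HasDerivAt (fun y : ℝ => 2 * (y - 1)) 2 z := by
        simpa using ((hasDerivAt_id z).sub_const 1).const_mul 2
      have hv : HasDerivAt (fun y : ℝ => y + 1) 1 z := (hasDerivAt_id z).add_const 1
      have h2 : HasDerivAt (fun y : ℝ => 2 * (y - 1) / (y + 1)) (4 / (z + 1) ^ 2) z := by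
        have := hu.div hv hzne
        exact this.congr_deriv (by ring)
      have hd : HasDerivAt (fun y : ℝ => Real.log y - 2 * (y - 1) / (y + 1))
          (z⁻¹ - 4 / (z + 1) ^ 2) z := h1.sub h2
      rw [hd.deriv]
      have heq : z⁻¹ - 4 / (z + 1) ^ 2 = (z - 1) ^ 2 / (z * (z + 1) ^ 2) := by
        field_simp
        ring
      rw [heq]
      exact div_pos (pow_pos (by linarith) 2) (by positivity)
  have h1 := h (Set.mem_Ici.2 le_rfl) (Set.mem_Ici.2 hy.le) hy
  simp only [Real.log_one] at h1
  norm_num at h1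
  linarith

/-- If `F(x*) = 0` for `x* ∈ (a, 1)` then `G(x*) < 0`, where
`F(x) = x - a + (1 - b) log((1 - x)/(1 - a))` and `G(x) = x - a + b log(a/x)`. -/
theorem F_zero_implies_G_neg
    (a b : ℝ) (ha : 0 < a) (hab : a < b) (hb : b < 1)
    (x : ℝ) (hx : x ∈ Set.Ioo a 1)
    (hF : x - a + (1 - b) * Real.log ((1 - x) / (1 - a)) = 0) :
    x - a + b * Real.log (a / x) < 0 := by
  obtain ⟨hax, hx1⟩ := hx
  have hx0 : 0 < x := lt_trans ha hax
  have h1x : 0 < 1 - x := by linarith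
  have h1a : 0 < 1 - a := by linarith
  have h1b : 0 < 1 - b := by linarith
  have hb0 : 0 < b := lt_trans ha hab
  -- rewrite hF
  have hlog1 : Real.log ((1 - x) / (1 - a)) = - Real.log ((1 - a) / (1 - x)) := by
    rw [← Real.log_inv, inv_div]
  rw [hlog1] at hF
  have hFe : x - a = (1 - b) * Real.log ((1 - a) / (1 - x)) := by linarith
  -- first application of the key lemma
  have hy1 : 1 < (1 - a) / (1 - x) := by
    rw [lt_div_iff₀ h1x]; linarith
  have hk1 := log_gt_aux _ hy1
  have heq1 : 2 * ((1 - a) / (1 - x) - 1) / ((1 - a) / (1 - x) + 1) =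
      2 * (x - a) / (2 - a - x) := by
    have h2 : (2 : ℝ) - a - x ≠ 0 := by linarith
    field_simp
    ring
  rw [heq1] at hk1
  have hlog2 : Real.log ((1 - a) / (1 - x)) = (x - a) / (1 - b) := by
    rw [hFe]; field_simp
  rw [hlog2] at hk1
  have h2ax : 0 < 2 - a - x := by linarith
  have hxa : 0 < x - a := by linarith
  -- derive x + a < 2b
  have hxb : x + a < 2 * b := by
    rw [div_lt_div_iff₀ h2ax h1b] at hk1
    nlinarith
  -- second application
  have hy2 : 1 < x / a := by rw [lt_div_iff₀ ha]; linarith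
  have hk2 := log_gt_aux _ hy2
  have heq2 : 2 * (x / a - 1) / (x / a + 1) = 2 * (x - a) / (x + a) := by
    have h2 : x + a ≠ 0 := by linarith
    field_simp
  rw [heq2] at hk2
  have hxa0 : 0 < x + a := by linarith
  have hlb : (x - a) / b < 2 * (x - a) / (x + a) := by
    rw [div_lt_div_iff₀ hb0 hxa0]
    nlinarith
  have hfin : (x - a) / b < Real.log (x / a) := lt_trans hlb hk2
  have hloga : Real.log (a / x) = - Real.log (x / a) := by
    rw [← Real.log_inv, inv_div]
  rw [hloga]
  rw [div_lt_iff₀ hb0] at hfin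
  nlinarith
end

section
/- Let 0 < b < 1 and S₀ ∈ (b, 1). Define recursively the sequences (Sₙ) and (Pₙ) by: Pₙ is the unique element of (0, b) with b·log Pₙ − Pₙ = b·log Sₙ − Sₙ, and S_{n+1} is the unique element of (b, 1) with S_{n+1} − Pₙ + (1 − b)·log((1 − S_{n+1})/(1 − Pₙ)) = 0. Then these sequences are well defined for all n, (Sₙ) is strictly decreasing and bounded below by b, (Pₙ) is strictly increasing and bounded above by b, and both sequences converge to b. -/
open Filter

namespace PoincareAux

open Set Real

noncomputable def f (b x : ℝ) : ℝ := b * Real.log x - x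
noncomputable def g (b x : ℝ) : ℝ := x + (1 - b) * Real.log (1 - x)
noncomputable def F (b x : ℝ) : ℝ := (1 - b) * g b x - b * f b x

lemma hasDerivAt_f (b : ℝ) {x : ℝ} (hx : x ≠ 0) :
    HasDerivAt (f b) (b * x⁻¹ - 1) x := by
  exact ((Real.hasDerivAt_log hx).const_mul b).sub (hasDerivAt_id x)

lemma hasDerivAt_g (b : ℝ) {x : ℝ} (hx : (1 : ℝ) - x ≠ 0) :
    HasDerivAt (g b) (1 - (1 - b) * (1 - x)⁻¹) x := by
  have h1 : HasDerivAt (fun y : ℝ => 1 - y) (-1) x := by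
    exact ((hasDerivAt_const x (1:ℝ)).sub (hasDerivAt_id x)).congr_deriv (by ring)
  have h2 : HasDerivAt (fun y : ℝ => Real.log (1 - y)) ((1 - x)⁻¹ * (-1)) x :=
    (Real.hasDerivAt_log hx).comp x h1
  have := (hasDerivAt_id x).add (h2.const_mul (1 - b))
  exact this.congr_deriv (by ring)

lemma hasDerivAt_F (b : ℝ) {x : ℝ} (hx : x ≠ 0) (hx1 : (1 : ℝ) - x ≠ 0) :
    HasDerivAt (F b) ((1 - b) * (1 - (1 - b) * (1 - x)⁻¹) - b * (b * x⁻¹ - 1)) x :=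
  ((hasDerivAt_g b hx1).const_mul (1 - b)).sub ((hasDerivAt_f b hx).const_mul b)

lemma f_mono (b : ℝ) (hb : 0 < b) : StrictMonoOn (f b) (Ioc 0 b) := by
  apply strictMonoOn_of_deriv_pos (convex_Ioc 0 b)
  · intro x hx
    exact ((hasDerivAt_f b (ne_of_gt hx.1)).continuousAt).continuousWithinAt
  · intro x hx
    rw [interior_Ioc] at hx
    rw [(hasDerivAt_f b (ne_of_gt hx.1)).deriv]
    have : (1:ℝ) < b * x⁻¹ := by
      rw [← div_eq_mul_inv]
      exact (one_lt_div hx.1).2 hx.2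
    linarith

lemma f_anti (b : ℝ) (hb : 0 < b) : StrictAntiOn (f b) (Ico b 1) := by
  apply strictAntiOn_of_deriv_neg (convex_Ico b 1)
  · intro x hx
    exact ((hasDerivAt_f b (ne_of_gt (lt_of_lt_of_le hb hx.1))).continuousAt).continuousWithinAt
  · intro x hx
    rw [interior_Ico] at hx
    rw [(hasDerivAt_f b (ne_of_gt (hb.trans hx.1))).deriv]
    have : b * x⁻¹ < 1 := by
      rw [← div_eq_mul_inv]
      exact (div_lt_one (hb.trans hx.1)).2 hx.1
    linarith

lemma g_mono (b : ℝ) (hb1 : b < 1) : StrictMonoOn (g b) (Ioc 0 b) := by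
  apply strictMonoOn_of_deriv_pos (convex_Ioc 0 b)
  · intro x hx
    have : (1:ℝ) - x ≠ 0 := by
      have := hx.2; nlinarith
    exact ((hasDerivAt_g b this).continuousAt).continuousWithinAt
  · intro x hx
    rw [interior_Ioc] at hx
    have hx1 : (0:ℝ) < 1 - x := by nlinarith [hx.2]
    rw [(hasDerivAt_g b (ne_of_gt hx1)).deriv]
    have : (1 - b) * (1 - x)⁻¹ < 1 := by
      rw [← div_eq_mul_inv]
      rw [div_lt_one hx1]
      linarith [hx.2]
    linarith

lemma g_anti (b : ℝ) (hb : 0 < b) : StrictAntiOn (g b) (Ico b 1) := by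
  apply strictAntiOn_of_deriv_neg (convex_Ico b 1)
  · intro x hx
    have : (1:ℝ) - x ≠ 0 := by have := hx.2; nlinarith
    exact ((hasDerivAt_g b this).continuousAt).continuousWithinAt
  · intro x hx
    rw [interior_Ico] at hx
    have hx1 : (0:ℝ) < 1 - x := by linarith [hx.2]
    rw [(hasDerivAt_g b (ne_of_gt hx1)).deriv]
    have : (1:ℝ) < (1 - b) * (1 - x)⁻¹ := by
      rw [← div_eq_mul_inv]
      rw [lt_div_iff₀ hx1]
      linarith [hx.1]
    linarith

lemma F_deriv_neg (b : ℝ) {x : ℝ} (hx0 : 0 < x) (hx1 : x < 1) (hxb : x ≠ b) :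
    (1 - b) * (1 - (1 - b) * (1 - x)⁻¹) - b * (b * x⁻¹ - 1) < 0 := by
  have h1 : (0:ℝ) < 1 - x := by linarith
  have key : (1 - b) * (1 - (1 - b) * (1 - x)⁻¹) - b * (b * x⁻¹ - 1)
      = -(x - b)^2 / (x * (1 - x)) := by
    field_simp
    ring
  rw [key]
  apply div_neg_of_neg_of_pos
  · have hxb' : x - b ≠ 0 := sub_ne_zero.mpr hxb
    have : (x - b)^2 > 0 := by positivity
    linarith
  · positivity

lemma F_anti1 (b : ℝ) (hb : 0 < b) (hb1 : b < 1) : StrictAntiOn (F b) (Ioc 0 b) := by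
  apply strictAntiOn_of_deriv_neg (convex_Ioc 0 b)
  · intro x hx
    have hx0 : x ≠ 0 := ne_of_gt hx.1
    have hx1 : (1:ℝ) - x ≠ 0 := by have := hx.2; nlinarith
    exact ((hasDerivAt_F b hx0 hx1).continuousAt).continuousWithinAt
  · intro x hx
    rw [interior_Ioc] at hx
    have hx1 : (1:ℝ) - x ≠ 0 := by nlinarith [hx.2]
    rw [(hasDerivAt_F b (ne_of_gt hx.1) hx1).deriv]
    exact F_deriv_neg b hx.1 (by nlinarith [hx.2]) (ne_of_lt hx.2)

lemma F_anti2 (b : ℝ) (hb : 0 < b) (hb1 : b < 1) : StrictAntiOn (F b) (Ico b 1) := by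
  apply strictAntiOn_of_deriv_neg (convex_Ico b 1)
  · intro x hx
    have hx0 : x ≠ 0 := ne_of_gt (hb.trans_le hx.1)
    have hx1 : (1:ℝ) - x ≠ 0 := by have := hx.2; nlinarith
    exact ((hasDerivAt_F b hx0 hx1).continuousAt).continuousWithinAt
  · intro x hx
    rw [interior_Ico] at hx
    have hx1 : (1:ℝ) - x ≠ 0 := by nlinarith [hx.2]
    rw [(hasDerivAt_F b (ne_of_gt (hb.trans hx.1)) hx1).deriv]
    exact F_deriv_neg b (hb.trans hx.1) hx.2 (ne_of_gt hx.1)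

lemma F_lt (b : ℝ) (hb : 0 < b) (hb1 : b < 1) {x y : ℝ}
    (hx : x ∈ Ioo (0:ℝ) 1) (hy : y ∈ Ioo (0:ℝ) 1) (hxy : x < y) : F b y < F b x := by
  rcases le_or_gt y b with h | h
  · exact F_anti1 b hb hb1 ⟨hx.1, (le_of_lt hxy).trans h⟩ ⟨hy.1, h⟩ hxy
  · rcases le_or_gt b x with h2 | h2
    · exact F_anti2 b hb hb1 ⟨h2, hx.2⟩ ⟨h2.trans hxy.le, hy.2⟩ hxy
    · calc F b y < F b b := F_anti2 b hb hb1 ⟨le_refl b, hb1⟩ ⟨h.le, hy.2⟩ h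
        _ < F b x := F_anti1 b hb hb1 ⟨hx.1, h2.le⟩ ⟨hb, le_refl b⟩ h2

lemma key_g (b : ℝ) (hb : 0 < b) (hb1 : b < 1) {P S : ℝ}
    (hP : P ∈ Ioo (0:ℝ) b) (hS : S ∈ Ioo b 1)
    (hf : f b P = f b S) : g b S < g b P := by
  have hPS : P < S := hP.2.trans hS.1
  have h := F_lt b hb hb1 ⟨hP.1, hP.2.trans hb1⟩ ⟨hb.trans hS.1, hS.2⟩ hPS
  unfold F at h
  rw [hf] at h
  nlinarith

lemma exP (b : ℝ) (hb : 0 < b) (hb1 : b < 1) {S : ℝ} (hS : S ∈ Ioo b 1) :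
    ∃ P ∈ Ioo (0:ℝ) b, f b P = f b S := by
  set c := f b S with hc
  have hcb : c < f b b :=
    f_anti b hb ⟨le_refl b, hb1⟩ ⟨hS.1.le, hS.2⟩ hS.1
  set x₀ := Real.exp (c / b) with hx₀
  have hx₀pos : 0 < x₀ := Real.exp_pos _
  have hx₀b : x₀ < b := by
    have h1 : c / b < Real.log b := by
      rw [div_lt_iff₀ hb]
      have : f b b = b * Real.log b - b := rfl
      nlinarith [hcb]
    rw [hx₀]
    exact (Real.exp_lt_exp.2 h1).trans_eq (Real.exp_log hb)
  have hfx₀ : f b x₀ = c - x₀ := by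
    rw [hx₀]; unfold f
    rw [Real.log_exp]
    field_simp
  have hfx₀c : f b x₀ < c := by rw [hfx₀]; linarith
  have hcont : ContinuousOn (f b) (Icc x₀ b) := by
    intro x hx
    exact ((hasDerivAt_f b (ne_of_gt (hx₀pos.trans_le hx.1))).continuousAt).continuousWithinAt
  obtain ⟨P, hPmem, hfP⟩ := intermediate_value_Ioo hx₀b.le hcont ⟨hfx₀c, hcb⟩
  exact ⟨P, ⟨hx₀pos.trans hPmem.1, hPmem.2⟩, hfP⟩

lemma exS (b : ℝ) (hb : 0 < b) (hb1 : b < 1) {P : ℝ} (hP : P ∈ Ioo (0:ℝ) b) :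
    ∃ S ∈ Ioo b 1, g b S = g b P := by
  set c := g b P with hc
  have hb1' : (0:ℝ) < 1 - b := by linarith
  have hcb : c < g b b :=
    g_mono b hb1 ⟨hP.1, hP.2.le⟩ ⟨hb, le_refl b⟩ hP.2
  set x₁ := 1 - Real.exp ((c - 1) / (1 - b)) with hx₁
  have hexp : (0:ℝ) < Real.exp ((c - 1) / (1 - b)) := Real.exp_pos _
  have hx₁1 : x₁ < 1 := by rw [hx₁]; linarith
  have hgbb : g b b = b + (1 - b) * Real.log (1 - b) := rfl
  have hx₁b : b < x₁ := by
    rw [hx₁]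
    have : Real.exp ((c - 1) / (1 - b)) < 1 - b := by
      have h1 : (c - 1) / (1 - b) < Real.log (1 - b) := by
        rw [div_lt_iff₀ hb1']
        nlinarith [hcb]
      exact (Real.exp_lt_exp.2 h1).trans_eq (Real.exp_log hb1')
    linarith
  have hgx₁ : g b x₁ = x₁ + (c - 1) := by
    rw [hx₁]; unfold g
    rw [show (1:ℝ) - (1 - Real.exp ((c - 1) / (1 - b))) = Real.exp ((c - 1) / (1 - b)) by ring,
      Real.log_exp]
    field_simp
  have hgx₁c : g b x₁ < c := by rw [hgx₁]; linarith
  have hcont : ContinuousOn (g b) (Icc b x₁) := by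
    intro x hx
    have : (1:ℝ) - x ≠ 0 := by
      have : x < 1 := lt_of_le_of_lt hx.2 hx₁1
      linarith
    exact ((hasDerivAt_g b this).continuousAt).continuousWithinAt
  obtain ⟨S, hSmem, hgS⟩ := intermediate_value_Ioo' hx₁b.le hcont ⟨hgx₁c, hcb⟩
  exact ⟨S, ⟨hSmem.1, hSmem.2.trans hx₁1⟩, hgS⟩

end PoincareAux

open PoincareAux Set

/-- The sequences `(Sₙ)` and `(Pₙ)` generated by alternately applying the fast map
`Π₁` and the entry–exit map `Π₂` are well defined, monotone, and both converge to
`b = 1/R₀`. -/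
theorem poincare_sequences_converge
    (b S₀ : ℝ) (hb : 0 < b) (hb1 : b < 1) (hS₀ : S₀ ∈ Set.Ioo b 1) :
    ∃ S P : ℕ → ℝ,
      S 0 = S₀ ∧
      (∀ n : ℕ, P n ∈ Set.Ioo 0 b ∧
        b * Real.log (P n) - P n = b * Real.log (S n) - S n) ∧
      (∀ n : ℕ, ∀ x ∈ Set.Ioo (0 : ℝ) b,
        b * Real.log x - x = b * Real.log (S n) - S n → x = P n) ∧
      (∀ n : ℕ, S (n + 1) ∈ Set.Ioo b 1 ∧
        S (n + 1) - P n + (1 - b) * Real.log ((1 - S (n + 1)) / (1 - P n)) = 0) ∧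
      (∀ n : ℕ, ∀ x ∈ Set.Ioo b 1,
        x - P n + (1 - b) * Real.log ((1 - x) / (1 - P n)) = 0 → x = S (n + 1)) ∧
      StrictAnti S ∧ (∀ n : ℕ, b < S n) ∧
      StrictMono P ∧ (∀ n : ℕ, P n < b) ∧
      Tendsto S atTop (nhds b) ∧ Tendsto P atTop (nhds b) := by
  classical
  have exP' : ∀ T : ℝ, T ∈ Set.Ioo b 1 → ∃ Q, Q ∈ Set.Ioo (0:ℝ) b ∧ f b Q = f b T := by
    intro T hT
    obtain ⟨Q, h1, h2⟩ := exP b hb hb1 hT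
    exact ⟨Q, h1, h2⟩
  choose! Pm hPm1 hPm2 using exP'
  have exS' : ∀ Q : ℝ, Q ∈ Set.Ioo (0:ℝ) b → ∃ T, T ∈ Set.Ioo b 1 ∧ g b T = g b Q := by
    intro Q hQ
    obtain ⟨T, h1, h2⟩ := exS b hb hb1 hQ
    exact ⟨T, h1, h2⟩
  choose! Sm hSm1 hSm2 using exS'
  set step : ℝ → ℝ := fun T => Sm (Pm T) with hstep
  set Sq : ℕ → ℝ := fun n => step^[n] S₀ with hSqdef
  have hSq0 : Sq 0 = S₀ := rfl
  have hSqsucc : ∀ n, Sq (n + 1) = Sm (Pm (Sq n)) := by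
    intro n
    simp only [hSqdef, Function.iterate_succ_apply', hstep]
  have hSmem : ∀ n, Sq n ∈ Set.Ioo b 1 := by
    intro n
    induction n with
    | zero => exact hS₀
    | succ n ih =>
      rw [hSqsucc]
      exact hSm1 _ (hPm1 _ ih)
  set Pq : ℕ → ℝ := fun n => Pm (Sq n) with hPqdef
  have hPmem : ∀ n, Pq n ∈ Set.Ioo (0:ℝ) b := fun n => hPm1 _ (hSmem n)
  have hfeq : ∀ n, f b (Pq n) = f b (Sq n) := fun n => hPm2 _ (hSmem n)
  have hgeq : ∀ n, g b (Sq (n + 1)) = g b (Pq n) := by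
    intro n
    rw [hSqsucc]
    exact hSm2 _ (hPmem n)
  have hSIco : ∀ n, Sq n ∈ Ico b 1 := fun n => ⟨(hSmem n).1.le, (hSmem n).2⟩
  have hPIoc : ∀ n, Pq n ∈ Ioc (0:ℝ) b := fun n => ⟨(hPmem n).1, (hPmem n).2.le⟩
  -- S strictly decreasing
  have hSdec : ∀ n, Sq (n + 1) < Sq n := by
    intro n
    have h1 : g b (Sq n) < g b (Pq n) := key_g b hb hb1 (hPmem n) (hSmem n) (hfeq n)
    have h2 : g b (Sq n) < g b (Sq (n + 1)) := by rw [hgeq n]; exact h1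
    exact ((g_anti b hb).lt_iff_gt (hSIco n) (hSIco (n + 1))).1 h2
  have hSanti : StrictAnti Sq := strictAnti_nat_of_succ_lt hSdec
  -- P strictly increasing
  have hPinc : ∀ n, Pq n < Pq (n + 1) := by
    intro n
    have h1 : f b (Sq n) < f b (Sq (n + 1)) :=
      ((f_anti b hb).lt_iff_gt (hSIco n) (hSIco (n + 1))).2 (hSdec n)
    have h2 : f b (Pq n) < f b (Pq (n + 1)) := by
      rw [hfeq n, hfeq (n + 1)]; exact h1
    exact ((f_mono b hb).lt_iff_lt (hPIoc n) (hPIoc (n + 1))).1 h2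
  have hPmono : StrictMono Pq := strictMono_nat_of_lt_succ hPinc
  -- convergence
  have hbdd : BddBelow (Set.range Sq) := ⟨b, by rintro _ ⟨n, rfl⟩; exact (hSmem n).1.le⟩
  have hSlim : Tendsto Sq atTop (nhds (⨅ n, Sq n)) :=
    tendsto_atTop_ciInf hSanti.antitone hbdd
  have hbddP : BddAbove (Set.range Pq) := ⟨b, by rintro _ ⟨n, rfl⟩; exact (hPmem n).2.le⟩
  have hPlim : Tendsto Pq atTop (nhds (⨆ n, Pq n)) :=
    tendsto_atTop_ciSup hPmono.monotone hbddP
  set L := ⨅ n, Sq n with hL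
  set M := ⨆ n, Pq n with hM
  have hbL : b ≤ L := le_ciInf fun n => (hSmem n).1.le
  have hL1 : L < 1 := lt_of_le_of_lt (ciInf_le hbdd 0) hS₀.2
  have hMb : M ≤ b := ciSup_le fun n => (hPmem n).2.le
  have hM0 : 0 < M := lt_of_lt_of_le (hPmem 0).1 (le_ciSup hbddP 0)
  have hL0 : (0:ℝ) < L := hb.trans_le hbL
  have hM1 : M < 1 := hMb.trans_lt hb1
  have hfL : Tendsto (fun n => f b (Sq n)) atTop (nhds (f b L)) :=
    ((hasDerivAt_f b hL0.ne').continuousAt.tendsto).comp hSlim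
  have hfM : Tendsto (fun n => f b (Pq n)) atTop (nhds (f b M)) :=
    ((hasDerivAt_f b hM0.ne').continuousAt.tendsto).comp hPlim
  have hfLM : f b M = f b L := by
    apply tendsto_nhds_unique (l := Filter.atTop (α := ℕ)) _ hfL
    have : (fun n => f b (Pq n)) = fun n => f b (Sq n) := funext hfeq
    rw [← this]
    exact hfM
  have hgL : Tendsto (fun n => g b (Sq (n + 1))) atTop (nhds (g b L)) :=
    ((hasDerivAt_g b (by linarith : (1:ℝ) - L ≠ 0)).continuousAt.tendsto).comp
      (hSlim.comp (tendsto_add_atTop_nat 1))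
  have hgM : Tendsto (fun n => g b (Pq n)) atTop (nhds (g b M)) :=
    ((hasDerivAt_g b (by linarith : (1:ℝ) - M ≠ 0)).continuousAt.tendsto).comp hPlim
  have hgLM : g b M = g b L := by
    apply tendsto_nhds_unique (l := Filter.atTop (α := ℕ)) _ hgL
    have : (fun n => g b (Sq (n + 1))) = fun n => g b (Pq n) := funext hgeq
    rw [this]
    exact hgM
  have hMeqL : M = L := by
    by_contra h
    have hlt : M < L := lt_of_le_of_ne (hMb.trans hbL) h
    have hF := F_lt b hb hb1 ⟨hM0, hM1⟩ ⟨hL0, hL1⟩ hlt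
    unfold F at hF
    rw [hfLM, hgLM] at hF
    exact lt_irrefl _ hF
  have hLb : L = b := le_antisymm (hMeqL ▸ hMb) hbL
  have hMb' : M = b := hMeqL.trans hLb
  refine ⟨Sq, Pq, hSq0, ?_, ?_, ?_, ?_, hSanti, fun n => (hSmem n).1, hPmono,
    fun n => (hPmem n).2, hLb ▸ hSlim, hMb' ▸ hPlim⟩
  · exact fun n => ⟨hPmem n, hfeq n⟩
  · intro n x hx hxe
    exact (f_mono b hb).injOn ⟨hx.1, hx.2.le⟩ (hPIoc n) (hxe.trans (hfeq n).symm)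
  · intro n
    refine ⟨hSmem (n + 1), ?_⟩
    have h1S : (0:ℝ) < 1 - Sq (n + 1) := by linarith [(hSmem (n + 1)).2]
    have h1P : (0:ℝ) < 1 - Pq n := by linarith [(hPmem n).2]
    rw [Real.log_div h1S.ne' h1P.ne']
    have h := hgeq n
    unfold g at h
    linear_combination h
  · intro n x hx hxe
    have h1x : (0:ℝ) < 1 - x := by linarith [hx.2]
    have h1P : (0:ℝ) < 1 - Pq n := by linarith [(hPmem n).2]
    rw [Real.log_div h1x.ne' h1P.ne'] at hxe
    have hgx : g b x = g b (Sq (n + 1)) := by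
      rw [hgeq n]
      unfold g
      linear_combination hxe
    exact (g_anti b hb).injOn ⟨hx.1.le, hx.2⟩ (hSIco (n + 1)) hgx
end

section
/- Let β, γ, ν > 0 and set R₀ = β/γ. Let (S, I, W) : [0, ∞) → ℝ³ solve the SIRWS layer equation S' = −β S I, I' = I(β S − γ), W' = −ν β I W, with S(t) > 0 and I(t) > 0 for all t ≥ 0, initial values S(0) = S₀, I(0) = I₀, W(0) = W₀, and suppose S(t) → S_∞ and I(t) → 0 as t → +∞. Then W(t) → W₀·exp(−ν R₀ (S₀ + I₀ − S_∞)) as t → +∞. -/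
open Filter

/-- Limit of the waning compartment along the SIRWS layer equation:
if `(S, I) → (S_∞, 0)` then `W → W₀ exp(-ν R₀ (S₀ + I₀ - S_∞))`, where `R₀ = β/γ`. -/
theorem sirws_layer_W_limit
    (β γ ν : ℝ) (hβ : 0 < β) (hγ : 0 < γ) (hν : 0 < ν)
    (S I W : ℝ → ℝ) (S₀ I₀ W₀ Sinf : ℝ)
    (hS : ∀ t : ℝ, 0 ≤ t → HasDerivAt S (-β * S t * I t) t)
    (hI : ∀ t : ℝ, 0 ≤ t → HasDerivAt I (I t * (β * S t - γ)) t)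
    (hW : ∀ t : ℝ, 0 ≤ t → HasDerivAt W (-ν * β * I t * W t) t)
    (hSpos : ∀ t : ℝ, 0 ≤ t → 0 < S t)
    (hIpos : ∀ t : ℝ, 0 ≤ t → 0 < I t)
    (hS0 : S 0 = S₀) (hI0 : I 0 = I₀) (hW0 : W 0 = W₀)
    (hSlim : Tendsto S atTop (nhds Sinf))
    (hIlim : Tendsto I atTop (nhds 0)) :
    Tendsto W atTop
      (nhds (W₀ * Real.exp (-(ν * (β / γ) * (S₀ + I₀ - Sinf))))) := by
  have hγ' : γ ≠ 0 := ne_of_gt hγ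
  set c : ℝ := ν * β / γ with hc
  set g : ℝ → ℝ := fun t => W t * Real.exp (-c * (S t + I t)) with hg
  -- derivative of g is 0 on [0,∞)
  have hgderiv : ∀ t : ℝ, 0 ≤ t → HasDerivAt g 0 t := by
    intro t ht
    have hSI : HasDerivAt (fun t => S t + I t)
        ((-β * S t * I t) + I t * (β * S t - γ)) t := (hS t ht).add (hI t ht)
    have hE : HasDerivAt (fun t => Real.exp (-c * (S t + I t)))
        (Real.exp (-c * (S t + I t)) * (-c * ((-β * S t * I t) + I t * (β * S t - γ)))) t :=
      (hSI.const_mul (-c)).exp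
    have := (hW t ht).mul hE
    refine this.congr_deriv ?_
    rw [hc]
    field_simp
    ring
  -- g is constant on [0,∞)
  have hgconst : ∀ t : ℝ, 0 ≤ t → g t = g 0 := by
    intro t ht
    have hcont : ContinuousOn g (Set.Icc 0 t) := fun x hx =>
      ((hgderiv x hx.1).continuousAt).continuousWithinAt
    have := constant_of_has_deriv_right_zero hcont
      (fun x hx => ((hgderiv x hx.1).hasDerivWithinAt))
    exact this t (Set.mem_Icc.2 ⟨ht, le_refl t⟩)
  -- Hence W t = g 0 * exp (c * (S t + I t)) eventually
  have hWeq : ∀ᶠ t in atTop, W t = g 0 * Real.exp (c * (S t + I t)) := by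
    filter_upwards [eventually_ge_atTop (0 : ℝ)] with t ht
    have h := hgconst t ht
    have hexp : Real.exp (-c * (S t + I t)) * Real.exp (c * (S t + I t)) = 1 := by
      rw [← Real.exp_add]; ring_nf; exact Real.exp_zero
    calc W t = W t * (Real.exp (-c * (S t + I t)) * Real.exp (c * (S t + I t))) := by
              rw [hexp, mul_one]
      _ = g t * Real.exp (c * (S t + I t)) := by rw [hg]; ring
      _ = g 0 * Real.exp (c * (S t + I t)) := by rw [h]
  -- limit
  have hlim : Tendsto (fun t => g 0 * Real.exp (c * (S t + I t))) atTop
      (nhds (g 0 * Real.exp (c * (Sinf + 0)))) := by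
    have hSI : Tendsto (fun t => S t + I t) atTop (nhds (Sinf + 0)) := hSlim.add hIlim
    exact (Real.continuous_exp.tendsto _).comp (hSI.const_mul c) |>.const_mul (g 0)
  have : Tendsto W atTop (nhds (g 0 * Real.exp (c * (Sinf + 0)))) :=
    hlim.congr' (hWeq.mono fun t h => h.symm)
  convert this using 2
  have hg0 : g 0 = W₀ * Real.exp (-c * (S₀ + I₀)) := by
    simp [hg, hS0, hI0, hW0]
  rw [hg0]
  conv_rhs => rw [mul_assoc, ← Real.exp_add]
  congr 1
  rw [hc]
  field_simp
  ring
end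

section
/- Let κ, ξ > 0, R₀ > 1, and let S_∞, W_∞ satisfy 0 ≤ S_∞, 0 ≤ W_∞, S_∞ + W_∞ ≤ 1 and S_∞ < 1/R₀. Set A = 2κ + ξ, B = 2κ(S_∞ + W_∞ − 1), C = S_∞ − 1. Then the exit-time equation −R₀·exp(−A T)·(A B T + A C + B)/A² + (R₀ − 1)·T + R₀·(A C + B)/A² = 0 has T = 0 as a solution and exactly one strictly positive solution T_E > 0. -/
/-- The exit-time equation for the slow SIRWS flow has `T = 0` as a solution and
exactly one strictly positive solution `T_E > 0`. -/
theorem sirws_exit_time_unique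
    (κ ξ R₀ Sinf Winf A B C : ℝ) (hκ : 0 < κ) (hξ : 0 < ξ) (hR₀ : 1 < R₀)
    (hSinf : 0 ≤ Sinf) (hWinf : 0 ≤ Winf) (hsum : Sinf + Winf ≤ 1)
    (hSR : Sinf < 1 / R₀)
    (hA : A = 2 * κ + ξ)
    (hB : B = 2 * κ * (Sinf + Winf - 1))
    (hC : C = Sinf - 1) :
    (-R₀ * Real.exp (-A * 0) * (A * B * 0 + A * C + B) / A ^ 2
        + (R₀ - 1) * 0 + R₀ * (A * C + B) / A ^ 2 = 0) ∧
    (∃! T : ℝ, 0 < T ∧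
      -R₀ * Real.exp (-A * T) * (A * B * T + A * C + B) / A ^ 2
        + (R₀ - 1) * T + R₀ * (A * C + B) / A ^ 2 = 0) := by
  have hApos : 0 < A := by rw [hA]; linarith
  have hAne : A ≠ 0 := ne_of_gt hApos
  have hR₀pos : (0:ℝ) < R₀ := by linarith
  have hS1 : Sinf < 1 := lt_of_lt_of_le hSR (by
    rw [div_le_one hR₀pos]; linarith)
  have hBle : B ≤ 0 := by rw [hB]; nlinarith
  have hBAC : 0 < B - A * C := by
    rw [hA, hB, hC]; nlinarith
  have hRS : R₀ * Sinf < 1 := by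
    have h := (lt_div_iff₀ hR₀pos).mp hSR
    nlinarith
  set f : ℝ → ℝ := fun T =>
    -R₀ * Real.exp (-A * T) * (A * B * T + A * C + B) / A ^ 2
      + (R₀ - 1) * T + R₀ * (A * C + B) / A ^ 2 with hf
  set g : ℝ → ℝ := fun T => R₀ * Real.exp (-A * T) * (B * T + C) + (R₀ - 1) with hg
  have hf0 : f 0 = 0 := by
    simp only [hf, mul_zero, neg_zero, Real.exp_zero]
    field_simp
    ring
  -- derivative of f is g
  have hderiv : ∀ T : ℝ, HasDerivAt f (g T) T := by
    intro T
    have he : HasDerivAt (fun T : ℝ => Real.exp (-A * T)) (Real.exp (-A * T) * -A) T := by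
      simpa using ((hasDerivAt_id T).const_mul (-A)).exp
    have hv : HasDerivAt (fun T : ℝ => A * B * T + A * C + B) (A * B) T := by
      simpa [add_assoc] using (((hasDerivAt_id T).const_mul (A * B)).add_const (A * C + B))
    have h1 : HasDerivAt (fun T : ℝ => -R₀ * Real.exp (-A * T) * (A * B * T + A * C + B))
        ((-R₀ * (Real.exp (-A * T) * -A)) * (A * B * T + A * C + B)
          + (-R₀ * Real.exp (-A * T)) * (A * B)) T :=
      (he.const_mul (-R₀)).mul hv
    have h3 : HasDerivAt (fun T : ℝ => (R₀ - 1) * T) (R₀ - 1) T := by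
      simpa using (hasDerivAt_id T).const_mul (R₀ - 1)
    have h4 := ((h1.div_const (A ^ 2)).add h3).add_const (R₀ * (A * C + B) / A ^ 2)
    have h5 : HasDerivAt f
        (((-R₀ * (Real.exp (-A * T) * -A)) * (A * B * T + A * C + B)
          + (-R₀ * Real.exp (-A * T)) * (A * B)) / A ^ 2 + (R₀ - 1)) T := h4
    refine h5.congr_deriv ?_
    simp only [hg]
    field_simp
    ring
  -- derivative of g
  have hderiv2 : ∀ T : ℝ, HasDerivAt g (R₀ * Real.exp (-A * T) * (B - A * (B * T + C))) T := by
    intro T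
    have he : HasDerivAt (fun T : ℝ => Real.exp (-A * T)) (Real.exp (-A * T) * -A) T := by
      simpa using ((hasDerivAt_id T).const_mul (-A)).exp
    have hv : HasDerivAt (fun T : ℝ => B * T + C) B T := by
      simpa using (((hasDerivAt_id T).const_mul B).add_const C)
    have h1 := ((he.const_mul R₀).mul hv).add_const (R₀ - 1)
    refine HasDerivAt.congr_deriv h1 ?_
    ring
  have hgcont : Continuous g :=
    Differentiable.continuous (fun T => (hderiv2 T).differentiableAt)
  have hfcont : Continuous f :=
    Differentiable.continuous (fun T => (hderiv T).differentiableAt)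
  -- g' > 0 on [0,∞)
  have hg'pos : ∀ T : ℝ, 0 ≤ T → 0 < R₀ * Real.exp (-A * T) * (B - A * (B * T + C)) := by
    intro T hT
    have hexp : 0 < Real.exp (-A * T) := Real.exp_pos _
    have h1 : 0 < B - A * (B * T + C) := by
      nlinarith [mul_nonneg (mul_nonneg hApos.le (neg_nonneg.mpr hBle)) hT]
    positivity
  -- g strictly monotone on [0,∞)
  have hgmono : StrictMonoOn g (Set.Ici 0) := by
    apply strictMonoOn_of_deriv_pos (convex_Ici 0) hgcont.continuousOn
    intro x hx
    rw [interior_Ici] at hx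
    rw [(hderiv2 x).deriv]
    exact hg'pos x (le_of_lt hx)
  -- f strictly convex on [0,∞)
  have hconv : StrictConvexOn ℝ (Set.Ici 0) f := by
    apply StrictMonoOn.strictConvexOn_of_deriv (convex_Ici 0) hfcont.continuousOn
    rw [interior_Ici]
    intro x hx y hy hxy
    rw [(hderiv x).deriv, (hderiv y).deriv]
    exact hgmono (Set.mem_Ici.mpr (le_of_lt hx)) (Set.mem_Ici.mpr (le_of_lt hy)) hxy
  -- g 0 < 0
  have hg0 : g 0 < 0 := by
    simp only [hg, mul_zero, neg_zero, Real.exp_zero, mul_one, zero_add, hC]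
    nlinarith
  -- find t > 0 with g t < 0
  obtain ⟨t, ht0, hgt⟩ : ∃ t : ℝ, 0 < t ∧ g t < 0 := by
    have hev : ∀ᶠ x in nhds (0:ℝ), g x < 0 :=
      Filter.Tendsto.eventually_lt_const hg0 (hgcont.tendsto 0)
    obtain ⟨ε, hε, hball⟩ := Metric.eventually_nhds_iff.mp hev
    refine ⟨ε / 2, by linarith, hball ?_⟩
    rw [Real.dist_eq, sub_zero, abs_of_pos (by linarith)]
    linarith
  -- f t < 0 by the mean value theorem
  have hft : f t < 0 := by
    obtain ⟨c, hc, hceq⟩ := exists_hasDerivAt_eq_slope f g ht0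
      hfcont.continuousOn (fun x _ => hderiv x)
    have hgc : g c < 0 := lt_trans (hgmono hc.1.le ht0.le hc.2) hgt
    have hslope : (f t - f 0) / (t - 0) < 0 := by rw [← hceq]; exact hgc
    rw [hf0, sub_zero, sub_zero] at hslope
    rcases div_neg_iff.mp hslope with ⟨h1, h2⟩ | ⟨h1, h2⟩
    · linarith
    · exact h1
  -- lower bound : f T > (R₀-1)T + K for T ≥ 0
  have hlower : ∀ T : ℝ, 0 ≤ T → (R₀ - 1) * T + R₀ * (A * C + B) / A ^ 2 < f T := by
    intro T hT
    have hexp : 0 < Real.exp (-A * T) := Real.exp_pos _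
    have hCneg : C < 0 := by rw [hC]; linarith
    have hnum : A * B * T + A * C + B < 0 := by
      nlinarith [mul_nonneg (mul_nonneg hApos.le (neg_nonneg.mpr hBle)) hT]
    have hpos : 0 < -R₀ * Real.exp (-A * T) * (A * B * T + A * C + B) / A ^ 2 := by
      apply div_pos _ (by positivity)
      nlinarith [mul_pos (mul_pos hR₀pos hexp) (neg_pos.mpr hnum)]
    simp only [hf]
    linarith
  set K := R₀ * (A * C + B) / A ^ 2 with hK
  set T₂ := max (t + 1) ((1 - K) / (R₀ - 1)) with hT₂
  have hT₂t : t < T₂ := lt_of_lt_of_le (by linarith) (le_max_left _ _)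
  have hT₂pos : 0 < T₂ := lt_trans ht0 hT₂t
  have hfT₂ : 0 < f T₂ := by
    have h1 : (1 - K) / (R₀ - 1) ≤ T₂ := le_max_right _ _
    have h2 : 1 - K ≤ (R₀ - 1) * T₂ := by
      rw [div_le_iff₀ (by linarith : (0:ℝ) < R₀ - 1)] at h1; linarith
    have := hlower T₂ hT₂pos.le
    linarith
  -- IVT on [t, T₂]
  obtain ⟨TE, hTEmem, hTEeq⟩ : ∃ TE ∈ Set.Ioo t T₂, f TE = 0 := by
    have h0mem : (0:ℝ) ∈ Set.Ioo (f t) (f T₂) := ⟨hft, hfT₂⟩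
    obtain ⟨TE, hmem, heq⟩ := intermediate_value_Ioo (le_of_lt hT₂t)
      hfcont.continuousOn h0mem
    exact ⟨TE, hmem, heq⟩
  have hTEpos : 0 < TE := lt_trans ht0 hTEmem.1
  -- uniqueness from strict convexity
  have hlt : ∀ x y : ℝ, 0 < x → 0 < y → f x = 0 → f y = 0 → x < y → False := by
    intro x y hx hy hfx hfy hxy
    have ha : (0:ℝ) < 1 - x / y := by
      have : x / y < 1 := (div_lt_one hy).mpr hxy
      linarith
    have hb : 0 < x / y := div_pos hx hy
    have key := hconv.2 (Set.self_mem_Ici) (Set.mem_Ici.mpr hy.le) (ne_of_lt hy)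
      ha hb (by ring)
    simp only [smul_eq_mul, mul_zero, zero_add] at key
    rw [div_mul_cancel₀ x (ne_of_gt hy), hf0, hfx, hfy] at key
    simp at key
  have huniq : ∀ x y : ℝ, 0 < x → 0 < y → f x = 0 → f y = 0 → x = y := by
    intro x y hx hy hfx hfy
    rcases lt_trichotomy x y with h | h | h
    · exact (hlt x y hx hy hfx hfy h).elim
    · exact h
    · exact (hlt y x hy hx hfy hfx h).elim
  constructor
  · have h0 : f 0 = 0 := hf0
    simpa [hf, Real.exp_zero] using h0
  · refine ⟨TE, ⟨hTEpos, hTEeq⟩, ?_⟩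
    intro y hy
    exact huniq y TE hy.1 hTEpos hy.2 hTEeq
end
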